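/- arXiv:math/0701564 — 8 statements merged into one kernel-verified Lean document; each statement's English description precedes it below -/
import Mathlib

section
/- Let ω̄ : [0,∞) → (0,∞) be continuous. Then lim_{t→∞} sup_{s>t} ( ∫_s^∞ ω̄(r)⁻¹ dr · ∫_t^s ω̄(r) dr ) = 0 if and only if lim_{s→∞} ( ∫_s^∞ ω̄(r)⁻¹ dr · ∫_0^s ω̄(r) dr ) = 0, where in the first condition the supremum is over all s > t. -/
open MeasureTheory Set Filter
open scoped ENNReal

section Aux
variable {f : ℝ → ℝ} (hfc : Continuous f) (hfpos : ∀ r, 0 < f r)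

include hfc in
lemma aux_fin (a b : ℝ) : ∫⁻ r in Ioc a b, ENNReal.ofReal (f r) ≠ ∞ := by
  obtain ⟨C, hC⟩ := isCompact_Icc.exists_bound_of_continuousOn (s := Icc a b) hfc.continuousOn
  have : ∫⁻ r in Ioc a b, ENNReal.ofReal (f r) ≤ ∫⁻ _ in Ioc a b, ENNReal.ofReal C := by
    refine setLIntegral_mono' measurableSet_Ioc fun x hx => ?_
    exact ENNReal.ofReal_le_ofReal ((le_abs_self _).trans (hC x (Ioc_subset_Icc_self hx)))
  refine ne_top_of_le_ne_top ?_ this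
  rw [setLIntegral_const, Real.volume_Ioc]
  exact ENNReal.mul_ne_top ENNReal.ofReal_ne_top ENNReal.ofReal_ne_top

include hfc hfpos in
lemma aux_pos {a b : ℝ} (hab : a < b) : 0 < ∫⁻ r in Ioc a b, ENNReal.ofReal (f r) := by
  obtain ⟨x, hx, hmin⟩ := isCompact_Icc.exists_isMinOn (nonempty_Icc.2 hab.le)
    (hfc.continuousOn (s := Icc a b))
  have h1 : ∫⁻ _ in Ioc a b, ENNReal.ofReal (f x) ≤ ∫⁻ r in Ioc a b, ENNReal.ofReal (f r) :=
    setLIntegral_mono' measurableSet_Ioc fun y hy =>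
      ENNReal.ofReal_le_ofReal (hmin (Ioc_subset_Icc_self hy))
  refine lt_of_lt_of_le ?_ h1
  rw [setLIntegral_const, Real.volume_Ioc]
  exact ENNReal.mul_pos (ENNReal.ofReal_pos.2 (hfpos x)).ne'
    (ENNReal.ofReal_pos.2 (by linarith)).ne'

lemma aux_split_Ioi (g : ℝ → ℝ≥0∞) {a b : ℝ} (hab : a ≤ b) :
    ∫⁻ r in Ioi a, g r = (∫⁻ r in Ioc a b, g r) + ∫⁻ r in Ioi b, g r := by
  rw [← Ioc_union_Ioi_eq_Ioi hab, lintegral_union measurableSet_Ioi]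
  exact Ioc_disjoint_Ioi le_rfl

lemma aux_split_Ioc (g : ℝ → ℝ≥0∞) {a b c : ℝ} (hab : a ≤ b) (hbc : b ≤ c) :
    ∫⁻ r in Ioc a c, g r = (∫⁻ r in Ioc a b, g r) + ∫⁻ r in Ioc b c, g r := by
  rw [← Ioc_union_Ioc_eq_Ioc hab hbc, lintegral_union measurableSet_Ioc]
  exact Ioc_disjoint_Ioc.2 (le_trans inf_le_left le_sup_right)

lemma aux_tail (g : ℝ → ℝ≥0∞) (hfin : ∫⁻ r in Ioi (0:ℝ), g r ≠ ∞) :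
    Tendsto (fun s : ℝ => ∫⁻ r in Ioi s, g r) atTop (nhds 0) := by
  set μ := volume.withDensity g with hμ
  have happ : ∀ s : ℝ, μ (Ioi s) = ∫⁻ r in Ioi s, g r := fun s =>
    withDensity_apply g measurableSet_Ioi
  have hiI : (⋂ s : ℝ, Ioi s) = ∅ := by
    ext x; simp only [mem_iInter, mem_Ioi, mem_empty_iff_false, iff_false, not_forall, not_lt]
    exact ⟨x, le_rfl⟩
  have := tendsto_measure_iInter_atTop (μ := μ) (s := fun s : ℝ => Ioi s)
    (fun s => measurableSet_Ioi.nullMeasurableSet) (fun i j hij => Ioi_subset_Ioi hij)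
    ⟨0, by rw [happ]; exact hfin⟩
  rw [hiI] at this
  rw [measure_empty] at this
  have heq : (⇑μ ∘ fun s : ℝ => Ioi s) = fun s : ℝ => ∫⁻ r in Ioi s, g r := funext fun s => happ s
  rwa [heq] at this

end Aux

/-- Corollary 3.2, infinite-volume case:
lim_{t→∞} sup_{s>t} (∫_s^∞ ω̄⁻¹ · ∫_t^s ω̄) = 0 ↔ lim_{s→∞} (∫_s^∞ ω̄⁻¹ · ∫_0^s ω̄) = 0. -/
theorem stmt2 (ω : ℝ → ℝ)
    (hωc : ContinuousOn ω (Ici 0)) (hωpos : ∀ r ∈ Ici (0:ℝ), 0 < ω r) :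
    Tendsto (fun t : ℝ => ⨆ s ∈ Ioi t, (∫⁻ r in Ioi s, ENNReal.ofReal (ω r)⁻¹) *
        ∫⁻ r in Ioc t s, ENNReal.ofReal (ω r)) atTop (nhds 0)
      ↔ Tendsto (fun s : ℝ => (∫⁻ r in Ioi s, ENNReal.ofReal (ω r)⁻¹) *
        ∫⁻ r in Ioc 0 s, ENNReal.ofReal (ω r)) atTop (nhds 0) := by
  set Ω : ℝ → ℝ := fun r => ω (max r 0) with hΩ
  have hΩc : Continuous Ω := hωc.comp_continuous (continuous_id.max continuous_const)
    fun x => mem_Ici.2 (le_max_right _ _)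
  have hΩpos : ∀ r, 0 < Ω r := fun r => hωpos _ (mem_Ici.2 (le_max_right _ _))
  have hΩic : Continuous fun r => (Ω r)⁻¹ := hΩc.inv₀ fun r => (hΩpos r).ne'
  have hΩipos : ∀ r, 0 < (Ω r)⁻¹ := fun r => inv_pos.2 (hΩpos r)
  have hΩeq : ∀ r : ℝ, 0 ≤ r → Ω r = ω r := fun r hr => by rw [hΩ]; simp [max_eq_left hr]
  -- congruence lemmas
  have hIoi : ∀ s : ℝ, 0 ≤ s →
      (∫⁻ r in Ioi s, ENNReal.ofReal (ω r)⁻¹) = ∫⁻ r in Ioi s, ENNReal.ofReal (Ω r)⁻¹ := by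
    intro s hs
    refine setLIntegral_congr_fun measurableSet_Ioi (fun x hx => ?_)
    rw [hΩeq x (hs.trans (le_of_lt hx))]
  have hIoc : ∀ t s : ℝ, 0 ≤ t →
      (∫⁻ r in Ioc t s, ENNReal.ofReal (ω r)) = ∫⁻ r in Ioc t s, ENNReal.ofReal (Ω r) := by
    intro t s ht
    refine setLIntegral_congr_fun measurableSet_Ioc (fun x hx => ?_)
    rw [hΩeq x (ht.trans (le_of_lt hx.1))]
  have hApos : ∀ t s : ℝ, t < s → 0 < ∫⁻ r in Ioc t s, ENNReal.ofReal (Ω r) :=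
    fun t s h => aux_pos hΩc hΩpos h
  have hAfin : ∀ t s : ℝ, (∫⁻ r in Ioc t s, ENNReal.ofReal (Ω r)) ≠ ∞ :=
    fun t s => aux_fin hΩc t s
  have hBfin : ∀ t s : ℝ, (∫⁻ r in Ioc t s, ENNReal.ofReal (Ω r)⁻¹) ≠ ∞ :=
    fun t s => aux_fin hΩic t s
  by_cases hI : (∫⁻ r in Ioi (0:ℝ), ENNReal.ofReal (ω r)⁻¹) = ∞
  · -- both sides fail
    have htail : ∀ s : ℝ, 0 ≤ s → (∫⁻ r in Ioi s, ENNReal.ofReal (ω r)⁻¹) = ∞ := by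
      intro s hs
      rw [hIoi s hs]
      have h0 : (∫⁻ r in Ioi (0:ℝ), ENNReal.ofReal (Ω r)⁻¹) = ∞ := by rw [← hIoi 0 le_rfl]; exact hI
      rw [aux_split_Ioi _ hs] at h0
      by_contra hne
      exact (ENNReal.add_ne_top.2 ⟨hBfin 0 s, hne⟩) h0
    refine iff_of_false ?_ ?_
    · intro h
      obtain ⟨t, ht⟩ := ((ENNReal.tendsto_nhds_zero.1 h 1 one_pos).and
        (eventually_ge_atTop (0:ℝ))).exists
      have hmem : t + 1 ∈ Ioi t := by simp [mem_Ioi]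
      have hval : (∫⁻ r in Ioi (t+1), ENNReal.ofReal (ω r)⁻¹) *
          (∫⁻ r in Ioc t (t+1), ENNReal.ofReal (ω r)) = ∞ := by
        rw [htail (t+1) (by linarith [ht.2]), hIoc t (t+1) ht.2]
        exact ENNReal.top_mul (hApos t (t+1) (by linarith)).ne'
      have hle := le_trans (le_iSup₂ (f := fun s (_ : s ∈ Ioi t) =>
        (∫⁻ r in Ioi s, ENNReal.ofReal (ω r)⁻¹) *
          ∫⁻ r in Ioc t s, ENNReal.ofReal (ω r)) (t+1) hmem) ht.1
      rw [hval] at hle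
      exact (by simp : ¬ (⊤ : ℝ≥0∞) ≤ 1) hle
    · intro h
      obtain ⟨s, hs⟩ := ((ENNReal.tendsto_nhds_zero.1 h 1 one_pos).and
        (eventually_ge_atTop (1:ℝ))).exists
      have hval : (∫⁻ r in Ioi s, ENNReal.ofReal (ω r)⁻¹) *
          (∫⁻ r in Ioc 0 s, ENNReal.ofReal (ω r)) = ∞ := by
        rw [htail s (by linarith [hs.2]), hIoc 0 s le_rfl]
        exact ENNReal.top_mul (hApos 0 s (by linarith [hs.2])).ne'
      rw [hval] at hs
      exact (by simp : ¬ (⊤ : ℝ≥0∞) ≤ 1) hs.1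
  · -- finite case
    have htend : Tendsto (fun s : ℝ => ∫⁻ r in Ioi s, ENNReal.ofReal (Ω r)⁻¹) atTop (nhds 0) := by
      refine aux_tail _ ?_
      rw [← hIoi 0 le_rfl]; exact hI
    constructor
    · intro h
      rw [ENNReal.tendsto_nhds_zero]
      intro ε hε
      obtain ⟨t, ht⟩ := ((ENNReal.tendsto_nhds_zero.1 h (ε/2)
        (ENNReal.half_pos hε.ne' |>.gt)).and (eventually_ge_atTop (0:ℝ))).exists
      have ht0 : (0:ℝ) ≤ t := ht.2
      have hsup : ∀ s : ℝ, t < s →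
          (∫⁻ r in Ioi s, ENNReal.ofReal (Ω r)⁻¹) * (∫⁻ r in Ioc t s, ENNReal.ofReal (Ω r))
            ≤ ε/2 := by
        intro s hs
        have := le_trans (le_iSup₂ (f := fun s (_ : s ∈ Ioi t) =>
          (∫⁻ r in Ioi s, ENNReal.ofReal (ω r)⁻¹) *
            ∫⁻ r in Ioc t s, ENNReal.ofReal (ω r)) s hs) ht.1
        rwa [hIoi s (ht0.trans hs.le), hIoc t s ht0] at this
      have hmul : Tendsto (fun s : ℝ => (∫⁻ r in Ioi s, ENNReal.ofReal (Ω r)⁻¹) *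
          (∫⁻ r in Ioc 0 t, ENNReal.ofReal (Ω r))) atTop (nhds 0) := by
        have := ENNReal.Tendsto.mul_const htend (Or.inr (hAfin 0 t))
        simpa using this
      filter_upwards [eventually_ge_atTop (t+1), ENNReal.tendsto_nhds_zero.1 hmul (ε/2)
        (ENNReal.half_pos hε.ne' |>.gt)] with s hs1 hs2
      have hts : t < s := by linarith
      have hs0 : (0:ℝ) ≤ s := le_trans ht0 hts.le
      rw [hIoi s hs0, hIoc 0 s le_rfl, aux_split_Ioc _ ht0 hts.le, mul_add]
      calc (∫⁻ r in Ioi s, ENNReal.ofReal (Ω r)⁻¹) * (∫⁻ r in Ioc 0 t, ENNReal.ofReal (Ω r))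
            + (∫⁻ r in Ioi s, ENNReal.ofReal (Ω r)⁻¹) * (∫⁻ r in Ioc t s, ENNReal.ofReal (Ω r))
          ≤ ε/2 + ε/2 := add_le_add hs2 (hsup s hts)
        _ = ε := ENNReal.add_halves ε
    · intro h
      rw [ENNReal.tendsto_nhds_zero]
      intro ε hε
      obtain ⟨S, hS⟩ := (ENNReal.tendsto_nhds_zero.1 h ε hε).exists_forall_of_atTop
      filter_upwards [eventually_ge_atTop (max S 0)] with t ht
      refine iSup₂_le fun s hs => ?_
      have hts : t < s := hs
      have ht0 : (0:ℝ) ≤ t := le_trans (le_max_right _ _) ht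
      have hmono : (∫⁻ r in Ioc t s, ENNReal.ofReal (ω r))
          ≤ ∫⁻ r in Ioc 0 s, ENNReal.ofReal (ω r) :=
        lintegral_mono_set (Ioc_subset_Ioc_left ht0)
      exact le_trans (mul_le_mul_right hmono _)
        (hS s (le_trans (le_trans (le_max_left _ _) ht) hts.le))
end

section
/- Let ω̄ : [0,∞) → (0,∞) be continuous. Then lim_{t→∞} sup_{s>t} ( ∫_t^s ω̄(r)⁻¹ dr · ∫_s^∞ ω̄(r) dr ) = 0 if and only if lim_{s→∞} ( ∫_0^s ω̄(r)⁻¹ dr · ∫_s^∞ ω̄(r) dr ) = 0. -/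
open MeasureTheory Set Filter
open scoped ENNReal

theorem aux3 (ω : ℝ → ℝ) (hc : Continuous ω) (hpos : ∀ r, 0 < ω r) :
    Tendsto (fun t : ℝ => ⨆ s ∈ Ioi t, (∫⁻ r in Ioc t s, ENNReal.ofReal (ω r)⁻¹) *
        ∫⁻ r in Ioi s, ENNReal.ofReal (ω r)) atTop (nhds 0)
      ↔ Tendsto (fun s : ℝ => (∫⁻ r in Ioc 0 s, ENNReal.ofReal (ω r)⁻¹) *
        ∫⁻ r in Ioi s, ENNReal.ofReal (ω r)) atTop (nhds 0) := by
  set g : ℝ → ℝ≥0∞ := fun r => ENNReal.ofReal (ω r)⁻¹ with hg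
  set f : ℝ → ℝ≥0∞ := fun r => ENNReal.ofReal (ω r) with hf
  have hgm : Measurable g := (hc.inv₀ fun x => (hpos x).ne').measurable.ennreal_ofReal
  have hfm : Measurable f := hc.measurable.ennreal_ofReal
  -- finiteness of integrals over bounded intervals
  have hgfin : ∀ a b : ℝ, (∫⁻ r in Ioc a b, g r) ≠ ∞ := fun a b =>
    ((hc.inv₀ fun x => (hpos x).ne').integrableOn_Ioc.lintegral_lt_top).ne
  have hffin : ∀ a b : ℝ, (∫⁻ r in Ioc a b, f r) ≠ ∞ := fun a b =>
    (hc.integrableOn_Ioc.lintegral_lt_top).ne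
  -- positivity
  have hgpos : ∀ a b : ℝ, a < b → 0 < ∫⁻ r in Ioc a b, g r := by
    intro a b hab
    rw [lintegral_pos_iff_support hgm]
    have : Function.support g = univ := by
      ext x; simp [hg, Function.mem_support, (ENNReal.ofReal_pos.2 (inv_pos.2 (hpos x))).ne']
    rw [this, Measure.restrict_apply_univ, Real.volume_Ioc]
    simpa using sub_pos.2 hab
  -- additivity
  have hadd : ∀ a t s : ℝ, a ≤ t → t ≤ s →
      (∫⁻ r in Ioc a s, g r) = (∫⁻ r in Ioc a t, g r) + ∫⁻ r in Ioc t s, g r := by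
    intro a t s h1 h2
    rw [← Ioc_union_Ioc_eq_Ioc h1 h2,
      lintegral_union measurableSet_Ioc (Set.Ioc_disjoint_Ioc_of_le le_rfl)]
  have haddf : ∀ s t : ℝ, s ≤ t →
      (∫⁻ r in Ioi s, f r) = (∫⁻ r in Ioc s t, f r) + ∫⁻ r in Ioi t, f r := by
    intro s t h
    rw [← Ioc_union_Ioi_eq_Ioi h,
      lintegral_union measurableSet_Ioi (Set.Ioc_disjoint_Ioi le_rfl)]
  by_cases hB : (∫⁻ r in Ioi (0:ℝ), f r) = ∞
  · -- infinite case: both sides false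
    have hBall : ∀ s : ℝ, 0 ≤ s → (∫⁻ r in Ioi s, f r) = ∞ := by
      intro s hs
      by_contra h
      rw [haddf 0 s hs] at hB
      exact (ENNReal.add_ne_top.2 ⟨hffin 0 s, h⟩) hB
    constructor <;> intro h <;> exfalso <;>
      rw [ENNReal.tendsto_nhds_zero] at h
    · obtain ⟨t, ht1, ht0⟩ := ((h 1 one_pos).and (eventually_ge_atTop (0:ℝ))).exists
      have hle : (∫⁻ r in Ioc t (t+1), g r) * ∫⁻ r in Ioi (t+1), f r ≤ 1 := by
        refine le_trans ?_ ht1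
        exact le_iSup₂_of_le (t+1) (by simp : t + 1 ∈ Ioi t) le_rfl
      rw [hBall (t+1) (by linarith), ENNReal.mul_top (hgpos t (t+1) (by linarith)).ne'] at hle
      exact (lt_irrefl _ (lt_of_le_of_lt hle ENNReal.one_lt_top)).elim
    · obtain ⟨s, hs1, hs0⟩ := ((h 1 one_pos).and (eventually_ge_atTop (1:ℝ))).exists
      rw [hBall s (by linarith), ENNReal.mul_top (hgpos 0 s (by linarith)).ne'] at hs1
      exact (lt_irrefl _ (lt_of_le_of_lt hs1 ENNReal.one_lt_top)).elim
  · -- finite case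
    have hBfin : ∀ s : ℝ, 0 ≤ s → (∫⁻ r in Ioi s, f r) ≠ ∞ := by
      intro s hs h
      apply hB
      rw [haddf 0 s hs, h]
      simp
    -- tail tendsto 0
    have htail : Tendsto (fun s : ℝ => ∫⁻ r in Ioi s, f r) atTop (nhds 0) := by
      have h1 : ∀ s : ℝ, (∫⁻ r in Ioi s, f r) = (volume.withDensity f) (Ioi s) := by
        intro s; rw [withDensity_apply f measurableSet_Ioi]
      have h2 := tendsto_measure_iInter_atTop (μ := volume.withDensity f)
        (s := fun s : ℝ => Ioi s) (fun s => measurableSet_Ioi.nullMeasurableSet)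
        (fun a b hab => Ioi_subset_Ioi hab) ⟨0, by rw [← h1 0]; exact hB⟩
      have h3 : (⋂ s : ℝ, Ioi s) = (∅ : Set ℝ) := by
        ext x; simp only [mem_iInter, mem_Ioi, mem_empty_iff_false, iff_false, not_forall, not_lt]
        exact ⟨x, le_rfl⟩
      rw [h3, measure_empty] at h2
      exact (tendsto_congr fun s => h1 s).2 h2
    rw [ENNReal.tendsto_nhds_zero, ENNReal.tendsto_nhds_zero]
    constructor
    · intro h ε hε
      obtain ⟨t₀, ht₀⟩ := eventually_atTop.1
        ((h (ε/2) (ENNReal.half_pos hε.ne')).and (eventually_ge_atTop (0:ℝ)))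
      obtain ⟨hsup, ht₀0⟩ := ht₀ t₀ le_rfl
      have hconst : Tendsto (fun s : ℝ => (∫⁻ r in Ioc 0 t₀, g r) * ∫⁻ r in Ioi s, f r)
          atTop (nhds 0) := by
        have := ENNReal.Tendsto.const_mul (a := ∫⁻ r in Ioc 0 t₀, g r) htail
          (Or.inr (hgfin 0 t₀))
        simpa using this
      rw [ENNReal.tendsto_nhds_zero] at hconst
      filter_upwards [hconst (ε/2) (ENNReal.half_pos hε.ne'),
        eventually_ge_atTop (t₀ + 1)] with s hs1 hs2
      have hst : t₀ < s := by linarith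
      calc (∫⁻ r in Ioc 0 s, g r) * ∫⁻ r in Ioi s, f r
          = ((∫⁻ r in Ioc 0 t₀, g r) + ∫⁻ r in Ioc t₀ s, g r) * ∫⁻ r in Ioi s, f r := by
            rw [hadd 0 t₀ s ht₀0 hst.le]
        _ = (∫⁻ r in Ioc 0 t₀, g r) * (∫⁻ r in Ioi s, f r)
              + (∫⁻ r in Ioc t₀ s, g r) * ∫⁻ r in Ioi s, f r := by rw [add_mul]
        _ ≤ ε/2 + ε/2 := by
            refine add_le_add hs1 (le_trans ?_ hsup)
            exact le_iSup₂_of_le s hst le_rfl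
        _ = ε := ENNReal.add_halves ε
    · intro h ε hε
      obtain ⟨t₀, ht₀⟩ := eventually_atTop.1 (h ε hε)
      filter_upwards [eventually_ge_atTop (max t₀ 0)] with t ht
      refine iSup₂_le fun s hs => ?_
      have h1 : (∫⁻ r in Ioc t s, g r) ≤ ∫⁻ r in Ioc 0 s, g r :=
        lintegral_mono_set (Ioc_subset_Ioc_left (le_trans (le_max_right t₀ 0) ht))
      exact le_trans (mul_le_mul_left h1 _)
        (ht₀ s (le_trans (le_max_left t₀ 0) (le_of_lt (lt_of_le_of_lt ht hs))))

/-- Corollary 3.2, finite-volume case: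
lim_{t→∞} sup_{s>t} (∫_t^s ω̄⁻¹ · ∫_s^∞ ω̄) = 0 ↔ lim_{s→∞} (∫_0^s ω̄⁻¹ · ∫_s^∞ ω̄) = 0. -/
theorem stmt3 (ω : ℝ → ℝ)
    (hωc : ContinuousOn ω (Ici 0)) (hωpos : ∀ r ∈ Ici (0:ℝ), 0 < ω r) :
    Tendsto (fun t : ℝ => ⨆ s ∈ Ioi t, (∫⁻ r in Ioc t s, ENNReal.ofReal (ω r)⁻¹) *
        ∫⁻ r in Ioi s, ENNReal.ofReal (ω r)) atTop (nhds 0)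
      ↔ Tendsto (fun s : ℝ => (∫⁻ r in Ioc 0 s, ENNReal.ofReal (ω r)⁻¹) *
        ∫⁻ r in Ioi s, ENNReal.ofReal (ω r)) atTop (nhds 0) := by
  set ω' : ℝ → ℝ := fun r => ω (max r 0) with hω'
  have hc : Continuous ω' :=
    hωc.comp_continuous (continuous_id.max continuous_const) fun x => le_max_right x 0
  have hpos : ∀ r, 0 < ω' r := fun r => hωpos _ (le_max_right r 0)
  -- congruence of the integrals on relevant sets
  have hIoc : ∀ t s : ℝ, 0 ≤ t →
      (∫⁻ r in Ioc t s, ENNReal.ofReal (ω r)⁻¹) = ∫⁻ r in Ioc t s, ENNReal.ofReal (ω' r)⁻¹ := by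
    intro t s ht
    refine setLIntegral_congr_fun measurableSet_Ioc (fun r hr => ?_)
    simp only [hω', max_eq_left (le_of_lt (lt_of_le_of_lt ht hr.1))]
  have hIoi : ∀ s : ℝ, 0 ≤ s →
      (∫⁻ r in Ioi s, ENNReal.ofReal (ω r)) = ∫⁻ r in Ioi s, ENNReal.ofReal (ω' r) := by
    intro s hs
    refine setLIntegral_congr_fun measurableSet_Ioi (fun r hr => ?_)
    simp only [hω', max_eq_left (le_of_lt (lt_of_le_of_lt hs hr))]
  have hEq1 : (fun t : ℝ => ⨆ s ∈ Ioi t, (∫⁻ r in Ioc t s, ENNReal.ofReal (ω r)⁻¹) *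
        ∫⁻ r in Ioi s, ENNReal.ofReal (ω r))
      =ᶠ[atTop] (fun t : ℝ => ⨆ s ∈ Ioi t, (∫⁻ r in Ioc t s, ENNReal.ofReal (ω' r)⁻¹) *
        ∫⁻ r in Ioi s, ENNReal.ofReal (ω' r)) := by
    filter_upwards [eventually_ge_atTop (0:ℝ)] with t ht
    refine iSup_congr fun s => iSup_congr fun hs => ?_
    rw [hIoc t s ht, hIoi s (le_trans ht (le_of_lt hs))]
  have hEq2 : (fun s : ℝ => (∫⁻ r in Ioc 0 s, ENNReal.ofReal (ω r)⁻¹) *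
        ∫⁻ r in Ioi s, ENNReal.ofReal (ω r))
      =ᶠ[atTop] (fun s : ℝ => (∫⁻ r in Ioc 0 s, ENNReal.ofReal (ω' r)⁻¹) *
        ∫⁻ r in Ioi s, ENNReal.ofReal (ω' r)) := by
    filter_upwards [eventually_ge_atTop (0:ℝ)] with s hs
    rw [hIoc 0 s le_rfl, hIoi s hs]
  rw [tendsto_congr' hEq1, tendsto_congr' hEq2]
  exact aux3 ω' hc hpos
end

section
/- Let ω̄ : [0,∞) → (0,∞) be continuous, and suppose that the limit L = lim_{s→∞} ω̄(s)² · (∫_s^∞ ω̄(r)⁻¹ dr)² exists in [0,∞]. If lim_{s→∞} ∫_s^∞ ω̄(r)⁻¹ dr · ∫_0^s ω̄(r) dr = 0 and ∫_0^∞ ω̄ dr = ∞, then lim_{s→∞} (d/ds) ln ∫_s^∞ ω̄(r)⁻¹ dr = -∞, i.e. lim_{s→∞} ω̄(s)⁻¹ / ∫_s^∞ ω̄(r)⁻¹ dr = ∞. -/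
open MeasureTheory Set Filter
open scoped ENNReal

private lemma aux_main (φ : ℝ → ℝ) (hc : Continuous φ) (hp : ∀ r, 0 < φ r)
    (L : ℝ≥0∞)
    (hL : Tendsto (fun s : ℝ => ENNReal.ofReal ((φ s)^2) *
        (∫⁻ r in Ioi s, ENNReal.ofReal (φ r)⁻¹)^2) atTop (nhds L))
    (h1 : Tendsto (fun s : ℝ => (∫⁻ r in Ioi s, ENNReal.ofReal (φ r)⁻¹) *
        ∫⁻ r in Ioc 0 s, ENNReal.ofReal (φ r)) atTop (nhds 0)) :
    Tendsto (fun s : ℝ => ENNReal.ofReal (φ s) *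
        ∫⁻ r in Ioi s, ENNReal.ofReal (φ r)⁻¹) atTop (nhds 0) := by
  have hcinv : Continuous fun r => (φ r)⁻¹ := hc.inv₀ fun r => (hp r).ne'
  set G : ℝ → ℝ≥0∞ := fun s => ∫⁻ r in Ioi s, ENNReal.ofReal (φ r)⁻¹ with hGdef
  set Vv : ℝ → ℝ≥0∞ := fun s => ∫⁻ r in Ioc 0 s, ENNReal.ofReal (φ r) with hVdef
  -- squared form
  have hF2 : ∀ s : ℝ, ENNReal.ofReal ((φ s)^2) * (G s)^2
      = (ENNReal.ofReal (φ s) * G s)^2 := by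
    intro s
    rw [ENNReal.ofReal_pow (hp s).le, mul_pow]
  have hL' : Tendsto (fun s : ℝ => (ENNReal.ofReal (φ s) * G s)^2) atTop (nhds L) := by
    refine hL.congr fun s => hF2 s
  -- positivity of G
  have Gpos : ∀ s : ℝ, 0 < G s := by
    intro s
    obtain ⟨x, hx, hmax⟩ := isCompact_Icc.exists_isMaxOn
      (nonempty_Icc.2 (by linarith : s ≤ s + 1)) (hc.continuousOn (s := Icc s (s+1)))
    have hlb : ENNReal.ofReal (φ x)⁻¹ * volume (Ioc s (s+1)) ≤ G s := by
      calc ENNReal.ofReal (φ x)⁻¹ * volume (Ioc s (s+1))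
          = ∫⁻ _ in Ioc s (s+1), ENNReal.ofReal (φ x)⁻¹ := (setLIntegral_const _ _).symm
        _ ≤ ∫⁻ r in Ioc s (s+1), ENNReal.ofReal (φ r)⁻¹ := by
            refine setLIntegral_mono (ENNReal.measurable_ofReal.comp hcinv.measurable)
              fun r hr => ?_
            exact ENNReal.ofReal_le_ofReal
              (inv_anti₀ (hp r) (hmax (Ioc_subset_Icc_self hr)))
        _ ≤ G s := lintegral_mono_set Ioc_subset_Ioi_self
    refine lt_of_lt_of_le ?_ hlb
    rw [Real.volume_Ioc]
    have : s + 1 - s = (1:ℝ) := by ring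
    rw [this]
    simp only [ENNReal.ofReal_one, mul_one]
    exact ENNReal.ofReal_pos.2 (inv_pos.2 (hp x))
  -- positivity of Vv for s ≥ 1
  have Vpos : ∀ s : ℝ, 1 ≤ s → 0 < Vv s := by
    intro s hs
    obtain ⟨x, hx, hmin⟩ := isCompact_Icc.exists_isMinOn
      (nonempty_Icc.2 (zero_le_one : (0:ℝ) ≤ 1)) (hc.continuousOn (s := Icc 0 1))
    have hlb : ENNReal.ofReal (φ x) * volume (Ioc (0:ℝ) 1) ≤ Vv s := by
      calc ENNReal.ofReal (φ x) * volume (Ioc (0:ℝ) 1)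
          = ∫⁻ _ in Ioc (0:ℝ) 1, ENNReal.ofReal (φ x) := (setLIntegral_const _ _).symm
        _ ≤ ∫⁻ r in Ioc (0:ℝ) 1, ENNReal.ofReal (φ r) := by
            refine setLIntegral_mono (ENNReal.measurable_ofReal.comp hc.measurable)
              fun r hr => ENNReal.ofReal_le_ofReal (hmin (Ioc_subset_Icc_self hr))
        _ ≤ Vv s := lintegral_mono_set (Ioc_subset_Ioc_right hs)
    refine lt_of_lt_of_le ?_ hlb
    rw [Real.volume_Ioc]
    simp only [sub_zero, ENNReal.ofReal_one, mul_one]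
    exact ENNReal.ofReal_pos.2 (hp x)
  -- real primitive
  set v : ℝ → ℝ := fun s => ∫ t in (0:ℝ)..s, φ t with hvdef
  have hVveq : ∀ s : ℝ, 0 ≤ s → Vv s = ENNReal.ofReal (v s) := by
    intro s hs
    rw [hvdef]
    simp only
    rw [intervalIntegral.integral_of_le hs,
      ofReal_integral_eq_lintegral_ofReal (hc.integrableOn_Ioc)
        (ae_of_all _ fun x => (hp x).le)]
  -- decomposition of G
  have hdec : ∀ a b : ℝ, a ≤ b →
      G a = ENNReal.ofReal (∫ t in a..b, (φ t)⁻¹) + G b := by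
    intro a b hab
    have hsplit : Ioi a = Ioc a b ∪ Ioi b := (Ioc_union_Ioi_eq_Ioi hab).symm
    rw [hGdef]
    simp only
    rw [hsplit, lintegral_union measurableSet_Ioi Ioc_disjoint_Ioi_same]
    congr 1
    rw [intervalIntegral.integral_of_le hab,
      ofReal_integral_eq_lintegral_ofReal (hcinv.integrableOn_Ioc)
        (ae_of_all _ fun x => (inv_pos.2 (hp x)).le)]
  -- main claim : L = 0
  have hL0 : L = 0 := by
    by_contra hL0
    -- pick m
    set m : ℝ≥0∞ := min 1 (L/2) with hmdef
    have hm1 : m ≤ 1 := min_le_left _ _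
    have hmtop : m ≠ ⊤ := (lt_of_le_of_lt hm1 ENNReal.one_lt_top).ne
    have hm0 : m ≠ 0 :=
      (lt_min one_pos (ENNReal.div_pos hL0 ENNReal.ofNat_ne_top)).ne'
    have hmL : m < L := by
      rcases eq_or_ne L ⊤ with h | h
      · rw [h]; exact lt_of_le_of_lt hm1 ENNReal.one_lt_top
      · exact lt_of_le_of_lt (min_le_right _ _) (ENNReal.half_lt_self hL0 h)
    -- eventual bounds
    have E1 : ∀ᶠ s in atTop, m < ENNReal.ofReal (φ s) * G s := by
      have h' := hL'.eventually (eventually_gt_nhds hmL)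
      filter_upwards [h'] with s hs
      by_contra hle
      push_neg at hle
      have hsq : (ENNReal.ofReal (φ s) * G s)^2 ≤ m := by
        calc (ENNReal.ofReal (φ s) * G s)^2 ≤ m^2 := pow_le_pow_left' hle 2
          _ = m * m := sq m
          _ ≤ 1 * m := mul_le_mul_left hm1 m
          _ = m := one_mul m
      exact absurd hs (not_lt.2 hsq)
    have hmm2 : (0:ℝ≥0∞) < m * m / 2 :=
      ENNReal.div_pos (mul_ne_zero hm0 hm0) ENNReal.ofNat_ne_top
    have E2 : ∀ᶠ s in atTop, G s * Vv s < m * m / 2 :=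
      h1.eventually (eventually_lt_nhds hmm2)
    obtain ⟨a, ha⟩ := eventually_atTop.1 (E1.and E2)
    set s₀ : ℝ := max a 1 with hs₀def
    have hs₀1 : (1:ℝ) ≤ s₀ := le_max_right _ _
    have H : ∀ s : ℝ, s₀ ≤ s →
        m < ENNReal.ofReal (φ s) * G s ∧ G s * Vv s < m * m / 2 :=
      fun s hs => ha s ((le_max_left a 1).trans hs)
    have hmm2top : m * m / 2 ≠ ⊤ :=
      (ENNReal.div_lt_top (ENNReal.mul_ne_top hmtop hmtop) two_ne_zero).ne
    have Gtop : ∀ s : ℝ, s₀ ≤ s → G s ≠ ⊤ := by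
      intro s hs hG
      have hV0 : Vv s ≠ 0 := (Vpos s (hs₀1.trans hs)).ne'
      have h' := (H s hs).2
      rw [hG, ENNReal.top_mul hV0] at h'
      exact not_top_lt h'
    set i : ℝ → ℝ := fun s => (G s).toReal with hidef
    have hGi : ∀ s : ℝ, s₀ ≤ s → G s = ENNReal.ofReal (i s) :=
      fun s hs => (ENNReal.ofReal_toReal (Gtop s hs)).symm
    have ipos : ∀ s : ℝ, s₀ ≤ s → 0 < i s :=
      fun s hs => ENNReal.toReal_pos (Gpos s).ne' (Gtop s hs)
    set c : ℝ := m.toReal with hcdef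
    have hc0 : 0 < c := ENNReal.toReal_pos hm0 hmtop
    have R1 : ∀ s : ℝ, s₀ ≤ s → c ≤ φ s * i s := by
      intro s hs
      have h' := (H s hs).1
      rw [hGi s hs, ← ENNReal.ofReal_mul (hp s).le] at h'
      have h'' := ENNReal.toReal_mono ENNReal.ofReal_ne_top h'.le
      rwa [ENNReal.toReal_ofReal
        (mul_nonneg (hp s).le ENNReal.toReal_nonneg)] at h''
    have vpos : ∀ s : ℝ, s₀ ≤ s → 0 < v s := by
      intro s hs
      have h0s : (0:ℝ) < s := lt_of_lt_of_le one_pos (hs₀1.trans hs)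
      exact intervalIntegral.intervalIntegral_pos_of_pos
        (hc.intervalIntegrable 0 s) hp h0s
    have R2 : ∀ s : ℝ, s₀ ≤ s → i s * v s ≤ c * c / 2 := by
      intro s hs
      have h0s : (0:ℝ) ≤ s := le_trans zero_le_one (hs₀1.trans hs)
      have h' := (H s hs).2
      rw [hGi s hs, hVveq s h0s, ← ENNReal.ofReal_mul ENNReal.toReal_nonneg] at h'
      have h'' := ENNReal.toReal_mono hmm2top h'.le
      rw [ENNReal.toReal_ofReal (mul_nonneg ENNReal.toReal_nonneg (vpos s hs).le)] at h''
      calc i s * v s ≤ (m * m / 2).toReal := h''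
        _ = c * c / 2 := by
            rw [ENNReal.toReal_div, ENNReal.toReal_mul]
            norm_num
            rfl
    have R5 : ∀ s : ℝ, s₀ ≤ s → v s ≤ c / 2 * φ s := by
      intro s hs
      have h1' := R1 s hs
      have h2' := R2 s hs
      have h3' := ipos s hs
      nlinarith [hp s, hc0, mul_le_mul_of_nonneg_left h1' (by positivity : (0:ℝ) ≤ c/2)]
    have hv' : ∀ x : ℝ, HasDerivAt v (φ x) x := fun x =>
      intervalIntegral.integral_hasDerivAt_right (hc.intervalIntegrable 0 x)
        (hc.stronglyMeasurableAtFilter _ _) hc.continuousAt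
    set J : ℝ → ℝ := fun s => ∫ t in s₀..s, (φ t)⁻¹ with hJdef
    have hJ' : ∀ x : ℝ, HasDerivAt J ((φ x)⁻¹) x := fun x =>
      intervalIntegral.integral_hasDerivAt_right (hcinv.intervalIntegrable s₀ x)
        (hcinv.stronglyMeasurableAtFilter _ _) hcinv.continuousAt
    have hiJ : ∀ s : ℝ, s₀ ≤ s → i s = i s₀ - J s := by
      intro s hs
      have hd := hdec s₀ s hs
      have hJ0 : 0 ≤ J s := intervalIntegral.integral_nonneg hs
        (fun x _ => (inv_pos.2 (hp x)).le)
      have h' := congrArg ENNReal.toReal hd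
      rw [ENNReal.toReal_add ENNReal.ofReal_ne_top (Gtop s hs),
        ENNReal.toReal_ofReal hJ0] at h'
      simp only [hidef]
      linarith [h']
    have hJcont : Continuous J := intervalIntegral.continuous_primitive
      (fun a b => hcinv.intervalIntegrable a b) s₀
    have hvcont : Continuous v := intervalIntegral.continuous_primitive
      (fun a b => hc.intervalIntegrable a b) 0
    have hicont : ContinuousOn i (Ici s₀) :=
      ((continuous_const.sub hJcont).continuousOn).congr hiJ
    have hi' : ∀ x : ℝ, s₀ < x → HasDerivAt i (-(φ x)⁻¹) x := by
      intro x hx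
      have h' : HasDerivAt (fun s => i s₀ - J s) (-(φ x)⁻¹) x := (hJ' x).const_sub (i s₀)
      refine h'.congr_of_eventuallyEq ?_
      filter_upwards [Ioi_mem_nhds hx] with y hy
      exact hiJ y (le_of_lt hy)
    set f : ℝ → ℝ := fun s => v s * i s with hfdef
    have hf' : ∀ x : ℝ, s₀ < x →
        HasDerivAt f (φ x * i x + v x * -(φ x)⁻¹) x :=
      fun x hx => (hv' x).mul (hi' x hx)
    have hderiv_lb : ∀ x : ℝ, s₀ < x → c / 2 ≤ φ x * i x + v x * -(φ x)⁻¹ := by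
      intro x hx
      have h1' := R1 x hx.le
      have h5 := R5 x hx.le
      have hφx := hp x
      have hv2 : v x * (φ x)⁻¹ ≤ c / 2 := by
        rw [← div_eq_mul_inv]
        exact (div_le_iff₀ hφx).2 (by linarith)
      linarith
    set g : ℝ → ℝ := fun s => f s - c / 2 * s with hgdef
    have hg' : ∀ x : ℝ, s₀ < x →
        HasDerivAt g (φ x * i x + v x * -(φ x)⁻¹ - c / 2) x := by
      intro x hx
      have h2 : HasDerivAt (fun y : ℝ => c / 2 * y) (c / 2) x := by
        simpa using (hasDerivAt_id x).const_mul (c / 2)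
      exact (hf' x hx).sub h2
    have hgmono : MonotoneOn g (Ici s₀) := by
      refine monotoneOn_of_deriv_nonneg (convex_Ici s₀) ?_ ?_ ?_
      · exact (hvcont.continuousOn.mul hicont).sub
          (continuous_const.mul continuous_id).continuousOn
      · intro x hx
        rw [interior_Ici] at hx
        exact ((hg' x hx).differentiableAt).differentiableWithinAt
      · intro x hx
        rw [interior_Ici] at hx
        rw [(hg' x hx).deriv]
        have := hderiv_lb x hx
        linarith
    have growth : ∀ s : ℝ, s₀ ≤ s → f s₀ + c / 2 * (s - s₀) ≤ f s := by
      intro s hs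
      have h' := hgmono self_mem_Ici hs hs
      simp only [hgdef] at h'
      linarith
    have hftends : Tendsto f atTop (nhds 0) := by
      have ht := (ENNReal.tendsto_toReal (by simp : (0:ℝ≥0∞) ≠ ⊤)).comp h1
      simp only [ENNReal.toReal_zero] at ht
      refine ht.congr' ?_
      filter_upwards [eventually_ge_atTop s₀] with s hs
      have h0s : (0:ℝ) ≤ s := le_trans zero_le_one (hs₀1.trans hs)
      show (G s * Vv s).toReal = f s
      rw [ENNReal.toReal_mul, hVveq s h0s,
        ENNReal.toReal_ofReal (vpos s hs).le]
      simp only [hfdef, hidef]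
      ring
    have hup : Tendsto (fun s : ℝ => f s₀ + c / 2 * (s - s₀)) atTop atTop := by
      apply tendsto_atTop_add_const_left
      apply Tendsto.const_mul_atTop (by positivity : (0:ℝ) < c / 2)
      apply tendsto_atTop_add_const_right
      exact tendsto_id
    have hbig := hup.eventually_ge_atTop 1
    have hsmall := hftends.eventually (eventually_lt_nhds one_pos)
    obtain ⟨s, hsa, hsb, hsc⟩ :=
      ((eventually_ge_atTop s₀).and (hbig.and hsmall)).exists
    have hgr := growth s hsa
    linarith [hsb, hsc]
  subst hL0
  -- conclude from F^2 → 0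
  rw [ENNReal.tendsto_nhds_zero] at hL' ⊢
  intro ε hε
  have hδ : (0:ℝ≥0∞) < (min ε 1)^2 := ENNReal.pow_pos (lt_min hε one_pos) 2
  filter_upwards [hL' _ hδ] with s hs
  by_contra hle
  push_neg at hle
  have h2 : min ε 1 < ENNReal.ofReal (φ s) * G s := lt_of_le_of_lt (min_le_left _ _) hle
  exact absurd hs (not_le.2 (ENNReal.pow_lt_pow_left two_ne_zero h2))


/-- L'Hopital simplification, infinite-volume case: if the limit
L = lim_s ω̄(s)²(∫_s^∞ ω̄⁻¹)² exists in [0,∞], lim_s (∫_s^∞ ω̄⁻¹)(∫_0^s ω̄) = 0 and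
∫_0^∞ ω̄ = ∞, then ω̄(s)⁻¹ / ∫_s^∞ ω̄⁻¹ → ∞. -/
theorem stmt4 (ω : ℝ → ℝ)
    (hωc : ContinuousOn ω (Ici 0)) (hωpos : ∀ r ∈ Ici (0:ℝ), 0 < ω r)
    (L : ℝ≥0∞)
    (hL : Tendsto (fun s : ℝ => ENNReal.ofReal ((ω s)^2) *
        (∫⁻ r in Ioi s, ENNReal.ofReal (ω r)⁻¹)^2) atTop (nhds L))
    (h1 : Tendsto (fun s : ℝ => (∫⁻ r in Ioi s, ENNReal.ofReal (ω r)⁻¹) *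
        ∫⁻ r in Ioc 0 s, ENNReal.ofReal (ω r)) atTop (nhds 0))
    (h2 : ∫⁻ r in Ioi 0, ENNReal.ofReal (ω r) = ⊤) :
    Tendsto (fun s : ℝ => ENNReal.ofReal (ω s)⁻¹ /
        ∫⁻ r in Ioi s, ENNReal.ofReal (ω r)⁻¹) atTop (nhds ⊤) := by
  set φ : ℝ → ℝ := fun r => ω (max r 0) with hφdef
  have hφc : Continuous φ :=
    hωc.comp_continuous (continuous_id.max continuous_const) fun x => le_max_right x 0
  have hφp : ∀ r, 0 < φ r := fun r => hωpos _ (le_max_right r 0)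
  have hφω : ∀ r : ℝ, 0 ≤ r → φ r = ω r := by
    intro r hr
    simp only [hφdef]
    rw [max_eq_left hr]
  have hGeq : ∀ s : ℝ, 0 ≤ s →
      (∫⁻ r in Ioi s, ENNReal.ofReal (φ r)⁻¹) = ∫⁻ r in Ioi s, ENNReal.ofReal (ω r)⁻¹ := by
    intro s hs
    refine setLIntegral_congr_fun measurableSet_Ioi (fun r hr => ?_)
    simp only [hφω r (le_trans hs (le_of_lt hr))]
  have hVeq : ∀ s : ℝ,
      (∫⁻ r in Ioc 0 s, ENNReal.ofReal (φ r)) = ∫⁻ r in Ioc 0 s, ENNReal.ofReal (ω r) := by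
    intro s
    refine setLIntegral_congr_fun measurableSet_Ioc (fun r hr => ?_)
    simp only [hφω r (le_of_lt hr.1)]
  have hLφ : Tendsto (fun s : ℝ => ENNReal.ofReal ((φ s)^2) *
      (∫⁻ r in Ioi s, ENNReal.ofReal (φ r)⁻¹)^2) atTop (nhds L) := by
    refine hL.congr' ?_
    filter_upwards [eventually_ge_atTop (0:ℝ)] with s hs
    rw [hGeq s hs, hφω s hs]
  have h1φ : Tendsto (fun s : ℝ => (∫⁻ r in Ioi s, ENNReal.ofReal (φ r)⁻¹) *
      ∫⁻ r in Ioc 0 s, ENNReal.ofReal (φ r)) atTop (nhds 0) := by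
    refine h1.congr' ?_
    filter_upwards [eventually_ge_atTop (0:ℝ)] with s hs
    rw [hGeq s hs, hVeq s]
  have key := aux_main φ hφc hφp L hLφ h1φ
  have hinv : Tendsto (fun s : ℝ => (ENNReal.ofReal (φ s) *
      ∫⁻ r in Ioi s, ENNReal.ofReal (φ r)⁻¹)⁻¹) atTop (nhds (0:ℝ≥0∞)⁻¹) :=
    ENNReal.tendsto_inv_iff.2 key
  rw [ENNReal.inv_zero] at hinv
  refine hinv.congr' ?_
  filter_upwards [eventually_ge_atTop (0:ℝ)] with s hs
  have hω0 : 0 < ω s := hωpos s hs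
  rw [hGeq s hs, hφω s hs]
  rw [ENNReal.mul_inv (Or.inl (ENNReal.ofReal_pos.2 hω0).ne') (Or.inl ENNReal.ofReal_ne_top)]
  rw [ENNReal.ofReal_inv_of_pos hω0, div_eq_mul_inv]
end

section
/- Let ω̄ : [0,∞) → (0,∞) be continuous with z(r) = ∫_0^r ω̄(s)⁻¹ ds satisfying z(r) → ∞ as r → ∞. Define r̂(r) by z(r̂) = 2z(r). If there exist R and ε > 0 such that z(r)·∫_r^{r̂} ω̄ ds < ε for all r > R, then for all r > R, ∫_0^r ω̄(s)⁻¹ ds · ∫_r^∞ ω̄(s) ds ≤ 2ε. -/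
open MeasureTheory Set Filter
open scoped ENNReal

/-- Key dyadic estimate: if z(r)∫_r^{r̂} ω̄ < ε for all r > R then
∫_0^r ω̄⁻¹ · ∫_r^∞ ω̄ ≤ 2ε for all r > R. -/
theorem stmt6 (ω : ℝ → ℝ)
    (hωc : ContinuousOn ω (Ici 0)) (hωpos : ∀ r ∈ Ici (0:ℝ), 0 < ω r)
    (hz : Tendsto (fun r : ℝ => ∫ s in Ioc 0 r, (ω s)⁻¹) atTop atTop)
    (rhat : ℝ → ℝ)
    (hrhat : ∀ r ≥ (0:ℝ), (∫ s in Ioc 0 (rhat r), (ω s)⁻¹) = 2 * ∫ s in Ioc 0 r, (ω s)⁻¹)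
    (R ε : ℝ) (hR : 0 ≤ R) (hε : 0 < ε)
    (hsmall : ∀ r > R, (∫ s in Ioc 0 r, (ω s)⁻¹) * ∫ s in Ioc r (rhat r), ω s < ε) :
    ∀ r > R, ENNReal.ofReal (∫ s in Ioc 0 r, (ω s)⁻¹) *
        ∫⁻ s in Ioi r, ENNReal.ofReal (ω s) ≤ ENNReal.ofReal (2 * ε) := by
  set z : ℝ → ℝ := fun t => ∫ s in Ioc 0 t, (ω s)⁻¹ with hzdef
  -- integrability of ω⁻¹ and ω on Ioc a b for 0 ≤ a
  have hInvInt : ∀ a b : ℝ, 0 ≤ a → IntegrableOn (fun s => (ω s)⁻¹) (Ioc a b) := by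
    intro a b ha
    rcases le_or_gt b a with h | h
    · simp [Set.Ioc_eq_empty (not_lt.mpr h)]
    · have hc : ContinuousOn (fun s => (ω s)⁻¹) (Icc a b) := by
        apply ContinuousOn.inv₀
        · exact hωc.mono (fun x hx => ha.trans hx.1)
        · intro x hx; exact ne_of_gt (hωpos x (ha.trans hx.1))
      exact hc.integrableOn_Icc.mono_set Ioc_subset_Icc_self
  have hωInt : ∀ a b : ℝ, 0 ≤ a → IntegrableOn ω (Ioc a b) := by
    intro a b ha
    rcases le_or_gt b a with h | h
    · simp [Set.Ioc_eq_empty (not_lt.mpr h)]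
    · have hc : ContinuousOn ω (Icc a b) := hωc.mono (fun x hx => ha.trans hx.1)
      exact hc.integrableOn_Icc.mono_set Ioc_subset_Icc_self
  -- additivity
  have hadd : ∀ a b : ℝ, 0 ≤ a → a ≤ b →
      z b = z a + ∫ s in Ioc a b, (ω s)⁻¹ := by
    intro a b ha hab
    have := Set.Ioc_union_Ioc_eq_Ioc ha hab
    rw [hzdef]
    simp only
    rw [← this, setIntegral_union (Set.Ioc_disjoint_Ioc_of_le le_rfl) measurableSet_Ioc
      (hInvInt 0 a le_rfl) (hInvInt a b ha)]
  -- positivity of pieces of z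
  have hpos : ∀ a b : ℝ, 0 ≤ a → a < b → 0 < ∫ s in Ioc a b, (ω s)⁻¹ := by
    intro a b ha hab
    rw [← intervalIntegral.integral_of_le hab.le]
    apply intervalIntegral.intervalIntegral_pos_of_pos_on
    · exact (intervalIntegrable_iff_integrableOn_Ioc_of_le hab.le).mpr (hInvInt a b ha)
    · intro x hx; exact inv_pos.mpr (hωpos x (ha.trans hx.1.le))
    · exact hab
  -- z monotone
  have hmono : ∀ a b : ℝ, 0 ≤ a → a ≤ b → z a ≤ z b := by
    intro a b ha hab
    rw [hadd a b ha hab]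
    have : 0 ≤ ∫ s in Ioc a b, (ω s)⁻¹ :=
      setIntegral_nonneg measurableSet_Ioc
        (fun x hx => (inv_pos.mpr (hωpos x (ha.trans hx.1.le))).le)
    linarith
  have hzpos : ∀ t : ℝ, 0 < t → 0 < z t := by
    intro t ht
    have hz0 : z 0 = 0 := by rw [hzdef]; simp
    rw [hadd 0 t le_rfl ht.le, hz0]
    linarith [hpos 0 t le_rfl ht]
  -- rhat moves up
  have hstep : ∀ t : ℝ, 0 < t → t < rhat t := by
    intro t ht
    have hzt : 0 < z t := hzpos t ht
    have h2 : z (rhat t) = 2 * z t := hrhat t ht.le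
    by_contra hle
    push_neg at hle
    rcases le_or_gt (rhat t) 0 with h0 | h0
    · have : z (rhat t) = 0 := by
        rw [hzdef]; simp [Set.Ioc_eq_empty (not_lt.mpr h0)]
      rw [this] at h2; linarith
    · have := hmono (rhat t) t h0.le hle
      rw [h2] at this; linarith
  intro r hr
  have hr0 : 0 < r := lt_of_le_of_lt hR hr
  -- the dyadic sequence
  set g : ℕ → ℝ := fun n => rhat^[n] r with hgdef
  have hg0 : g 0 = r := rfl
  have hgsucc : ∀ n, g (n + 1) = rhat (g n) := by
    intro n; rw [hgdef]; simp only; rw [Function.iterate_succ_apply']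
  have hgR : ∀ n, R < g n ∧ z (g n) = 2 ^ n * z r := by
    intro n
    induction n with
    | zero => exact ⟨hr, by simp [hg0]⟩
    | succ n ih =>
      have hgn0 : 0 < g n := lt_of_le_of_lt hR ih.1
      constructor
      · rw [hgsucc n]; exact ih.1.trans (hstep (g n) hgn0)
      · have h : z (rhat (g n)) = 2 * z (g n) := hrhat (g n) hgn0.le
        rw [hgsucc n, h, ih.2]; ring
  have hglt : ∀ n, g n < g (n + 1) := by
    intro n
    rw [hgsucc n]
    exact hstep (g n) (lt_of_le_of_lt hR (hgR n).1)
  have hgmono : Monotone g := monotone_nat_of_le_succ (fun n => (hglt n).le)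
  -- g unbounded
  have hgtop : ∀ M : ℝ, ∃ n, M < g n := by
    intro M
    have hzr : 0 < z r := hzpos r hr0
    obtain ⟨n, hn⟩ := pow_unbounded_of_one_lt (z (max M 0) / z r) (by norm_num : (1:ℝ) < 2)
    refine ⟨n, ?_⟩
    have h1 : z (max M 0) < z (g n) := by
      rw [(hgR n).2]
      calc z (max M 0) = z (max M 0) / z r * z r := by field_simp
        _ < 2 ^ n * z r := by exact mul_lt_mul_of_pos_right hn hzr
    by_contra hle
    push_neg at hle
    have hgn0 : (0:ℝ) ≤ g n := (hR.trans (hgR n).1.le)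
    have := hmono (g n) (max M 0) hgn0 (hle.trans (le_max_left M 0))
    have h2 : g n ≤ max M 0 := hle.trans (le_max_left M 0)
    exact absurd (hmono (g n) (max M 0) hgn0 h2) (not_le.mpr h1)
  -- decomposition of Ioi r
  have hdecomp : Ioi r = ⋃ n, Ioc (g n) (g (n + 1)) := by
    ext x
    simp only [mem_Ioi, mem_iUnion, mem_Ioc]
    constructor
    · intro hx
      have hex : ∃ n, x ≤ g n := by
        obtain ⟨n, hn⟩ := hgtop x
        exact ⟨n, hn.le⟩
      set n := Nat.find hex with hndef
      have hn : x ≤ g n := Nat.find_spec hex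
      have hn0 : n ≠ 0 := by
        intro h
        rw [h, hg0] at hn
        exact absurd hn (not_le.mpr hx)
      obtain ⟨m, hm⟩ := Nat.exists_eq_succ_of_ne_zero hn0
      refine ⟨m, ?_, by rw [← Nat.succ_eq_add_one, ← hm]; exact hn⟩
      have := Nat.find_min hex (by omega : m < n)
      push_neg at this
      exact this
    · rintro ⟨n, h1, _⟩
      calc r = g 0 := hg0.symm
        _ ≤ g n := hgmono (Nat.zero_le n)
        _ < x := h1
  have hdisj : Pairwise (Function.onFun Disjoint (fun n => Ioc (g n) (g (n + 1)))) := by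
    intro m n hmn
    rcases lt_or_gt_of_ne hmn with h | h
    · apply Set.Ioc_disjoint_Ioc.mpr
      have : g (m + 1) ≤ g n := hgmono h
      calc min (g (m+1)) (g (n+1)) ≤ g (m+1) := min_le_left _ _
        _ ≤ g n := this
        _ ≤ max (g m) (g n) := le_max_right _ _
    · apply (Set.Ioc_disjoint_Ioc.mpr _).symm
      have : g (n + 1) ≤ g m := hgmono h
      calc min (g (n+1)) (g (m+1)) ≤ g (n+1) := min_le_left _ _
        _ ≤ g m := this
        _ ≤ max (g n) (g m) := le_max_right _ _
  rw [hdecomp, lintegral_iUnion (fun n => measurableSet_Ioc) hdisj, ← ENNReal.tsum_mul_left]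
  have hterm : ∀ n, ENNReal.ofReal (z r) *
      ∫⁻ s in Ioc (g n) (g (n + 1)), ENNReal.ofReal (ω s) ≤ ENNReal.ofReal (ε * (1/2)^n) := by
    intro n
    have hgn0 : (0:ℝ) ≤ g n := hR.trans (hgR n).1.le
    have hi : IntegrableOn ω (Ioc (g n) (g (n+1))) := hωInt _ _ hgn0
    have hae : 0 ≤ᵐ[volume.restrict (Ioc (g n) (g (n+1)))] ω := by
      rw [EventuallyLE, ae_restrict_iff' measurableSet_Ioc]
      exact Eventually.of_forall (fun x hx => (hωpos x (hgn0.trans hx.1.le)).le)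
    rw [← ofReal_integral_eq_lintegral_ofReal hi hae,
        ← ENNReal.ofReal_mul (hzpos r hr0).le]
    apply ENNReal.ofReal_le_ofReal
    have hs := hsmall (g n) (hgR n).1
    rw [← hgsucc n] at hs
    have hzgn : z (g n) = 2 ^ n * z r := (hgR n).2
    have hInt_nonneg : 0 ≤ ∫ s in Ioc (g n) (g (n+1)), ω s :=
      setIntegral_nonneg measurableSet_Ioc
        (fun x hx => (hωpos x (hgn0.trans hx.1.le)).le)
    have h2n : (0:ℝ) < 2 ^ n := by positivity
    have : z r * ∫ s in Ioc (g n) (g (n+1)), ω s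
        = (z (g n) * ∫ s in Ioc (g n) (g (n+1)), ω s) / 2 ^ n := by
      rw [hzgn]; field_simp
    rw [this]
    rw [div_le_iff₀ h2n]
    calc z (g n) * ∫ s in Ioc (g n) (g (n+1)), ω s ≤ ε := hs.le
      _ = ε * (1/2)^n * 2^n := by
          rw [mul_assoc, one_div, inv_pow, inv_mul_cancel₀ (ne_of_gt h2n), mul_one]
  calc ∑' n, ENNReal.ofReal (z r) * ∫⁻ s in Ioc (g n) (g (n + 1)), ENNReal.ofReal (ω s)
      ≤ ∑' n, ENNReal.ofReal (ε * (1/2)^n) := ENNReal.tsum_le_tsum hterm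
    _ = ENNReal.ofReal (∑' n : ℕ, ε * (1/2)^n) := by
        rw [ENNReal.ofReal_tsum_of_nonneg (fun n => by positivity)
          (summable_geometric_two.mul_left ε)]
    _ = ENNReal.ofReal (2 * ε) := by
        rw [tsum_mul_left, tsum_geometric_two]; ring_nf
end

section
/- Let ω̄_c : [0,∞) → (0,∞) be continuous, and suppose there exist c₁ > 0 and a strictly increasing sequence (t_n) with t_0 ≥ 0 and t_n → ∞ such that for all n, ∫_{t_{n+1}}^∞ ω̄_c(r)⁻¹ dr · ∫_{t_n}^{t_{n+1}} ω̄_c(s) ds > c₁. Then ∫_0^∞ ω̄_c(r)⁻¹ ( ∫_0^r ω̄_c(s) ds ) dr = ∞. -/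
open MeasureTheory Set Filter
open scoped ENNReal

/-- Divergence criterion: if along a strictly increasing sequence t_n → ∞ each term
∫_{t_{n+1}}^∞ ω̄_c⁻¹ · ∫_{t_n}^{t_{n+1}} ω̄_c exceeds c₁ > 0, then
∫_0^∞ ω̄_c(r)⁻¹ (∫_0^r ω̄_c) dr = ∞. -/
theorem stmt7 (ω : ℝ → ℝ)
    (hωc : ContinuousOn ω (Ici 0)) (hωpos : ∀ r ∈ Ici (0:ℝ), 0 < ω r)
    (c₁ : ℝ) (hc₁ : 0 < c₁) (t : ℕ → ℝ) (hmono : StrictMono t) (ht0 : 0 ≤ t 0)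
    (htop : Tendsto t atTop atTop)
    (hterm : ∀ n : ℕ, ENNReal.ofReal c₁ <
      (∫⁻ r in Ioi (t (n+1)), ENNReal.ofReal (ω r)⁻¹) *
        ENNReal.ofReal (∫ s in Ioc (t n) (t (n+1)), ω s)) :
    ∫⁻ r in Ioi 0, ENNReal.ofReal ((ω r)⁻¹ * ∫ s in Ioc 0 r, ω s) = ⊤ := by
  classical
  set a : ℕ → ℝ := fun k => ∫ s in Ioc (t k) (t (k+1)), ω s with ha
  have htnn : ∀ n, 0 ≤ t n := fun n => ht0.trans (hmono.monotone (Nat.zero_le n))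
  have hωnn : ∀ r ∈ Ici (0:ℝ), 0 ≤ ω r := fun r hr => (hωpos r hr).le
  have hint : ∀ b c : ℝ, 0 ≤ b → IntegrableOn ω (Ioc b c) := by
    intro b c hb
    have : IntegrableOn ω (Icc b c) :=
      (hωc.mono (fun x hx => hb.trans hx.1)).integrableOn_Icc
    exact this.mono_set Ioc_subset_Icc_self
  have hann : ∀ k, 0 ≤ a k := by
    intro k
    exact setIntegral_nonneg measurableSet_Ioc
      (fun x hx => hωnn x ((htnn k).trans hx.1.le))
  have hsum : ∀ M : ℕ, ∑ k ∈ Finset.range M, a k = ∫ s in Ioc (t 0) (t M), ω s := by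
    intro M
    induction M with
    | zero => simp
    | succ M ih =>
      rw [Finset.sum_range_succ, ih, ← setIntegral_union (Ioc_disjoint_Ioc_of_le le_rfl)
        measurableSet_Ioc (hint _ _ (htnn 0)) (hint _ _ (htnn M)),
        Ioc_union_Ioc_eq_Ioc (hmono.monotone (Nat.zero_le M)) (hmono (Nat.lt_succ_self M)).le]
  -- pointwise bound on the tsum of indicators
  have hpt : ∀ r : ℝ, 0 < r →
      (∑' k, (Ioi (t (k+1))).indicator (fun _ => ENNReal.ofReal (a k)) r)
        ≤ ENNReal.ofReal (∫ s in Ioc 0 r, ω s) := by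
    intro r hr
    rw [ENNReal.tsum_eq_iSup_sum]
    refine iSup_le fun s => ?_
    have hfil : ∑ k ∈ s, (Ioi (t (k+1))).indicator (fun _ => ENNReal.ofReal (a k)) r
        = ∑ k ∈ s.filter (fun k => t (k+1) < r), ENNReal.ofReal (a k) := by
      rw [Finset.sum_filter]
      refine Finset.sum_congr rfl fun k _ => ?_
      by_cases h : t (k+1) < r
      · simp [Set.indicator_apply, mem_Ioi, h]
      · simp [Set.indicator_apply, mem_Ioi, h]
    rw [hfil]
    set s' := s.filter (fun k => t (k+1) < r) with hs'
    rcases s'.eq_empty_or_nonempty with he | hne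
    · simp [he]
    · set m := s'.max' hne with hm
      have hmlt : t (m+1) < r := (Finset.mem_filter.1 (s'.max'_mem hne)).2
      have hsub : s' ⊆ Finset.range (m+1) := by
        intro k hk
        exact Finset.mem_range.2 (Nat.lt_succ_of_le (s'.le_max' k hk))
      calc ∑ k ∈ s', ENNReal.ofReal (a k)
          ≤ ∑ k ∈ Finset.range (m+1), ENNReal.ofReal (a k) :=
            Finset.sum_le_sum_of_subset hsub
        _ = ENNReal.ofReal (∑ k ∈ Finset.range (m+1), a k) :=
            (ENNReal.ofReal_sum_of_nonneg (fun k _ => hann k)).symm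
        _ = ENNReal.ofReal (∫ s in Ioc (t 0) (t (m+1)), ω s) := by rw [hsum]
        _ ≤ ENNReal.ofReal (∫ s in Ioc 0 r, ω s) := by
            refine ENNReal.ofReal_le_ofReal ?_
            refine setIntegral_mono_set (hint 0 r le_rfl) ?_ ?_
            · filter_upwards [self_mem_ae_restrict measurableSet_Ioc] with x hx
              exact hωnn x (le_of_lt hx.1)
            · exact HasSubset.Subset.eventuallyLE
                (Ioc_subset_Ioc ht0 hmlt.le)
  -- measurability
  have h2 : AEMeasurable ω (volume.restrict (Ioi (0:ℝ))) :=
    (hωc.aemeasurable measurableSet_Ici).mono_measure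
      (Measure.restrict_mono Ioi_subset_Ici_self le_rfl)
  have hmeas : AEMeasurable (fun r => ENNReal.ofReal (ω r)⁻¹) (volume.restrict (Ioi (0:ℝ))) :=
    ENNReal.measurable_ofReal.comp_aemeasurable h2.inv
  set F : ℕ → ℝ → ℝ≥0∞ := fun k r =>
    (Ioi (t (k+1))).indicator (fun r => ENNReal.ofReal (a k) * ENNReal.ofReal (ω r)⁻¹) r with hF
  have hFmeas : ∀ k, AEMeasurable (F k) (volume.restrict (Ioi (0:ℝ))) := fun k =>
    ((hmeas.const_mul _).indicator measurableSet_Ioi)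
  have hIoisub : ∀ k : ℕ, Ioi (t (k+1)) ⊆ Ioi (0:ℝ) := fun k => Ioi_subset_Ioi (htnn _)
  have step1 : ∀ k : ℕ, ∫⁻ r in Ioi (0:ℝ), F k r =
      ENNReal.ofReal (a k) * ∫⁻ r in Ioi (t (k+1)), ENNReal.ofReal (ω r)⁻¹ := by
    intro k
    rw [hF]
    rw [lintegral_indicator measurableSet_Ioi, Measure.restrict_restrict measurableSet_Ioi,
      inter_eq_left.2 (hIoisub k), lintegral_const_mul' _ _ ENNReal.ofReal_ne_top]
  have htsum : ∑' k, ∫⁻ r in Ioi (0:ℝ), F k r = ⊤ := by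
    have hlb : ∀ k, ENNReal.ofReal c₁ ≤ ∫⁻ r in Ioi (0:ℝ), F k r := by
      intro k
      rw [step1 k, mul_comm]
      exact (hterm k).le
    refine top_unique ?_
    calc (⊤ : ℝ≥0∞) = ∑' _ : ℕ, ENNReal.ofReal c₁ :=
          (ENNReal.tsum_const_eq_top_of_ne_zero (ENNReal.ofReal_pos.2 hc₁).ne').symm
      _ ≤ ∑' k, ∫⁻ r in Ioi (0:ℝ), F k r := ENNReal.tsum_le_tsum hlb
  have hswap : ∫⁻ r in Ioi (0:ℝ), ∑' k, F k r = ⊤ := by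
    rw [lintegral_tsum hFmeas]; exact htsum
  refine top_unique ?_
  rw [← hswap]
  refine lintegral_mono_ae ?_
  filter_upwards [self_mem_ae_restrict measurableSet_Ioi] with r hr
  have hrpos : (0:ℝ) < r := hr
  have hptr := hpt r hrpos
  have heq : ∀ k, F k r =
      (Ioi (t (k+1))).indicator (fun _ => ENNReal.ofReal (a k)) r * ENNReal.ofReal (ω r)⁻¹ := by
    intro k
    simp only [hF, Set.indicator_apply]
    by_cases h : r ∈ Ioi (t (k+1)) <;> simp [h]
  calc ∑' k, F k r
      = (∑' k, (Ioi (t (k+1))).indicator (fun _ => ENNReal.ofReal (a k)) r)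
          * ENNReal.ofReal (ω r)⁻¹ := by
        simp_rw [heq]; exact ENNReal.tsum_mul_right
    _ ≤ ENNReal.ofReal (∫ s in Ioc 0 r, ω s) * ENNReal.ofReal (ω r)⁻¹ :=
        mul_le_mul_left hptr _
    _ = ENNReal.ofReal ((ω r)⁻¹ * ∫ s in Ioc 0 r, ω s) := by
        rw [ENNReal.ofReal_mul (inv_nonneg.2 (hωnn r hrpos.le)), mul_comm]
end

section
/- Let ω̄_c : [0,∞) → (0,∞) be C¹ and let u : [0,∞) → ℝ solve -u'' - (ω̄_c'/ω̄_c) u' + u = 0 with u(0) = 1, u'(0) = 0. Then for all r > 0, u(r) > 0 and u'(r) > 0. -/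
open MeasureTheory Set Filter

/-- If u solves -u'' - (ω̄_c'/ω̄_c)u' + u = 0 on [0,∞) with u(0)=1, u'(0)=0, and ω̄_c is a
positive C¹ weight, then u > 0 and u' > 0 on (0,∞). -/
theorem stmt8 (ω : ℝ → ℝ) (hω : ContDiff ℝ 1 ω) (hωpos : ∀ r ∈ Ici (0:ℝ), 0 < ω r)
    (u : ℝ → ℝ) (hu : ContDiff ℝ 2 u)
    (hode : ∀ r ≥ (0:ℝ), -(deriv (deriv u) r) - (deriv ω r / ω r) * deriv u r + u r = 0)
    (h0 : u 0 = 1) (h0' : deriv u 0 = 0) :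
    ∀ r > (0:ℝ), 0 < u r ∧ 0 < deriv u r := by
  have hu1 : ContDiff ℝ 1 (deriv u) := by
    have := (contDiff_succ_iff_deriv (n := 1)).mp (by exact_mod_cast hu)
    exact this.2.2
  have hdu : Differentiable ℝ u := hu.differentiable (by norm_num)
  have hdu' : Differentiable ℝ (deriv u) := hu1.differentiable one_ne_zero
  have hdω : Differentiable ℝ ω := hω.differentiable one_ne_zero
  have hcddu : Continuous (deriv (deriv u)) := hu1.continuous_deriv le_rfl
  have hcdω : Continuous (deriv ω) := hω.continuous_deriv le_rfl
  set f : ℝ → ℝ := fun r => u r * deriv u r * ω r with hf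
  have hF : ∀ r : ℝ, HasDerivAt f
      ((deriv u r * deriv u r + u r * deriv (deriv u) r) * ω r
        + u r * deriv u r * deriv ω r) r := by
    intro r
    exact (((hdu r).hasDerivAt.mul (hdu' r).hasDerivAt)).mul (hdω r).hasDerivAt
  have hderiv : deriv f = fun r =>
      (deriv u r * deriv u r + u r * deriv (deriv u) r) * ω r
        + u r * deriv u r * deriv ω r := funext fun r => (hF r).deriv
  have hkey : ∀ r ∈ Ici (0:ℝ), deriv f r = ω r * ((u r)^2 + (deriv u r)^2) := by
    intro r hr
    have hω0 : ω r ≠ 0 := (hωpos r hr).ne'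
    have hodr := hode r hr
    have hdd : deriv (deriv u) r = u r - deriv ω r / ω r * deriv u r := by linarith
    rw [hderiv]
    simp only [hdd]
    field_simp
    ring
  have hmono : MonotoneOn f (Ici (0:ℝ)) := by
    apply monotoneOn_of_deriv_nonneg (convex_Ici 0)
      (((hdu.mul hdu').mul hdω).continuous.continuousOn)
      (fun x _ => ((hdu.mul hdu').mul hdω).differentiableAt.differentiableWithinAt)
    intro x hx
    rw [interior_Ici] at hx
    show 0 ≤ deriv f x
    rw [hkey x (mem_Ici.mpr (le_of_lt hx))]
    exact mul_nonneg (hωpos x (mem_Ici.mpr (le_of_lt hx))).le (by positivity)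
  have hcont : Continuous (deriv f) := by
    rw [hderiv]
    exact (((hdu'.continuous.mul hdu'.continuous).add
      (hdu.continuous.mul hcddu)).mul hdω.continuous).add
      ((hdu.continuous.mul hdu'.continuous).mul hcdω)
  have h0pos : 0 < deriv f 0 := by
    rw [hkey 0 (mem_Ici.mpr le_rfl), h0, h0']
    have := hωpos 0 (mem_Ici.mpr le_rfl)
    nlinarith
  obtain ⟨δ, hδpos, hδ⟩ : ∃ δ > 0, ∀ s, |s| < δ → 0 < deriv f s := by
    have hev := continuousAt_const.eventually_lt (hcont.continuousAt (x := 0)) h0pos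
    rw [Metric.eventually_nhds_iff] at hev
    obtain ⟨δ, hδ1, hδ2⟩ := hev
    exact ⟨δ, hδ1, fun s hs => hδ2 (by simpa [Real.dist_eq] using hs)⟩
  have hsmono : StrictMonoOn f (Icc (0:ℝ) δ) := by
    apply strictMonoOn_of_deriv_pos (convex_Icc 0 δ)
      (((hdu.mul hdu').mul hdω).continuous.continuousOn)
    intro x hx
    rw [interior_Icc] at hx
    exact hδ x (by rw [abs_of_pos hx.1]; exact hx.2)
  have hfpos : ∀ r > (0:ℝ), 0 < f r := by
    intro r hr
    have hm : min r δ ≤ r := min_le_left _ _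
    have hmpos : 0 < min r δ := lt_min hr hδpos
    have h1 : f 0 < f (min r δ) :=
      hsmono ⟨le_rfl, hδpos.le⟩ ⟨hmpos.le, min_le_right _ _⟩ hmpos
    have h2 : f (min r δ) ≤ f r := hmono hmpos.le hr.le hm
    have hf0 : f 0 = 0 := by simp [hf, h0']
    linarith
  have hune : ∀ r > (0:ℝ), u r ≠ 0 := by
    intro r hr hz
    have := hfpos r hr
    rw [hf] at this
    simp only [hz, zero_mul] at this
    linarith
  intro r hr
  have hupos : 0 < u r := by
    by_contra hle
    push_neg at hle
    have hlt : u r < 0 := lt_of_le_of_ne hle (hune r hr)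
    have : (0:ℝ) ∈ Icc (u r) (u 0) := by rw [h0]; constructor <;> linarith
    obtain ⟨c, hc, hcz⟩ := intermediate_value_Icc' hr.le hdu.continuous.continuousOn this
    have hc0 : c ≠ 0 := by intro h; rw [h, h0] at hcz; norm_num at hcz
    exact hune c (lt_of_le_of_ne hc.1 (Ne.symm hc0)) hcz
  have hprod : 0 < u r * deriv u r := by
    have h3 : 0 < u r * deriv u r * ω r := hfpos r hr
    rcases mul_pos_iff.mp h3 with ⟨h4, _⟩ | ⟨_, h5⟩
    · exact h4
    · linarith [hωpos r hr.le]
  refine ⟨hupos, ?_⟩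
  rcases mul_pos_iff.mp hprod with ⟨_, h6⟩ | ⟨h7, _⟩
  · exact h6
  · linarith
end

section
/- Let ω̄ : [0,∞) → (0,∞) be continuous and 0 ≤ t < s < s₀ < s₁ with ∫_s^{s₀} ω̄⁻¹ dr = ∫_{s₀}^{s₁} ω̄⁻¹ dr, and define v on (t,∞) by: v(r) = (∫_t^r ω̄⁻¹ dr')/(∫_t^s ω̄⁻¹ dr') for t < r ≤ s; v(r) = 1 for s < r ≤ s₀; v(r) = 2 - (∫_t^r ω̄⁻¹ dr' - ∫_t^s ω̄⁻¹ dr')/(∫_{s₀}^{s₁} ω̄⁻¹ dr') for s₀ < r ≤ s₁; v(r) = 0 for r > s₁. Then (∫_t^∞ (v')² ω̄ dr)/(∫_t^∞ v² ω̄ dr) ≤ (1 + (∫_t^s ω̄⁻¹ dr')/(∫_s^{s₀} ω̄⁻¹ dr')) · ( ∫_t^s ω̄⁻¹ dr' · ∫_s^{s₀} ω̄ dr' )⁻¹. -/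
open MeasureTheory Set Filter

/-- Necessity test function, finite-volume case: for the Lipschitz function v rising linearly in
the coordinate ∫_t^r ω̄⁻¹ on (t,s], equal to 1 on (s,s₀], decaying on (s₀,s₁] (with
∫_s^{s₀} ω̄⁻¹ = ∫_{s₀}^{s₁} ω̄⁻¹), and 0 beyond s₁, the Rayleigh quotient is at most
(1 + ∫_t^s ω̄⁻¹ / ∫_s^{s₀} ω̄⁻¹) · (∫_t^s ω̄⁻¹ · ∫_s^{s₀} ω̄)⁻¹. -/
theorem stmt11 (ω : ℝ → ℝ)
    (hωc : ContinuousOn ω (Ici 0)) (hωpos : ∀ r ∈ Ici (0:ℝ), 0 < ω r)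
    (t s s₀ s₁ : ℝ) (ht : 0 ≤ t) (hts : t < s) (hss : s < s₀) (hs₀₁ : s₀ < s₁)
    (heq : (∫ r in Ioc s s₀, (ω r)⁻¹) = ∫ r in Ioc s₀ s₁, (ω r)⁻¹)
    (v : ℝ → ℝ)
    (hv : ∀ r ∈ Ioi t, v r =
      if r ≤ s then (∫ x in Ioc t r, (ω x)⁻¹) / ∫ x in Ioc t s, (ω x)⁻¹
      else if r ≤ s₀ then 1
      else if r ≤ s₁ then
        2 - ((∫ x in Ioc t r, (ω x)⁻¹) - ∫ x in Ioc t s, (ω x)⁻¹) / ∫ x in Ioc s₀ s₁, (ω x)⁻¹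
      else 0) :
    (∫ r in Ioi t, (deriv v r)^2 * ω r) / (∫ r in Ioi t, (v r)^2 * ω r)
      ≤ (1 + (∫ x in Ioc t s, (ω x)⁻¹) / ∫ x in Ioc s s₀, (ω x)⁻¹) *
          ((∫ x in Ioc t s, (ω x)⁻¹) * ∫ x in Ioc s s₀, ω x)⁻¹ := by
  have hωne : ∀ r ∈ Ici (0:ℝ), ω r ≠ 0 := fun r hr => (hωpos r hr).ne'
  have hinvc : ContinuousOn (fun x => (ω x)⁻¹) (Ici 0) := hωc.inv₀ hωne
  have hinvpos : ∀ r ∈ Ici (0:ℝ), 0 < (ω r)⁻¹ := fun r hr => inv_pos.2 (hωpos r hr)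
  have hIccsub : ∀ a : ℝ, 0 ≤ a → ∀ b : ℝ, Icc a b ⊆ Ici (0:ℝ) :=
    fun a ha b x hx => le_trans ha hx.1
  have hInt : ∀ a b : ℝ, 0 ≤ a → IntegrableOn (fun x => (ω x)⁻¹) (Ioc a b) := by
    intro a b ha
    rcases le_total a b with hab | hab
    · exact ((hinvc.mono (hIccsub a ha b)).integrableOn_Icc).mono_set Ioc_subset_Icc_self
    · rw [Ioc_eq_empty (not_lt.mpr hab)]; exact integrableOn_empty
  have hIntω : ∀ a b : ℝ, 0 ≤ a → IntegrableOn ω (Ioc a b) := by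
    intro a b ha
    rcases le_total a b with hab | hab
    · exact ((hωc.mono (hIccsub a ha b)).integrableOn_Icc).mono_set Ioc_subset_Icc_self
    · rw [Ioc_eq_empty (not_lt.mpr hab)]; exact integrableOn_empty
  have hposInt : ∀ (f : ℝ → ℝ), ContinuousOn f (Ici 0) → (∀ r ∈ Ici (0:ℝ), 0 < f r) →
      ∀ a b : ℝ, 0 ≤ a → a < b → 0 < ∫ x in Ioc a b, f x := by
    intro f hfc hfpos a b ha hab
    rw [← intervalIntegral.integral_of_le hab.le]
    refine intervalIntegral.intervalIntegral_pos_of_pos_on ?_ ?_ hab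
    · exact ContinuousOn.intervalIntegrable
        (by rw [uIcc_of_le hab.le]; exact hfc.mono (hIccsub a ha b))
    · intro x hx; exact hfpos x (le_trans ha hx.1.le)
  set A := ∫ x in Ioc t s, (ω x)⁻¹ with hAdef
  set B := ∫ x in Ioc s₀ s₁, (ω x)⁻¹ with hBdef
  set C := ∫ x in Ioc s s₀, (ω x)⁻¹ with hCdef
  set W := ∫ x in Ioc s s₀, ω x with hWdef
  have hs0 : (0:ℝ) ≤ s := le_trans ht hts.le
  have hs₀0 : (0:ℝ) ≤ s₀ := le_trans hs0 hss.le
  have hA0 : 0 < A := hposInt _ hinvc hinvpos t s ht hts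
  have hB0 : 0 < B := hposInt _ hinvc hinvpos s₀ s₁ hs₀0 hs₀₁
  have hC0 : 0 < C := hposInt _ hinvc hinvpos s s₀ hs0 hss
  have hW0 : 0 < W := hposInt _ hωc hωpos s s₀ hs0 hss
  -- monotonicity of r ↦ ∫_{Ioc t r} ω⁻¹
  have hFmono : ∀ r₁ r₂ : ℝ, r₁ ≤ r₂ →
      (∫ x in Ioc t r₁, (ω x)⁻¹) ≤ ∫ x in Ioc t r₂, (ω x)⁻¹ := by
    intro r₁ r₂ h
    refine setIntegral_mono_set (hInt t r₂ ht) ?_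
      (HasSubset.Subset.eventuallyLE (Ioc_subset_Ioc_right h))
    filter_upwards [ae_restrict_mem measurableSet_Ioc] with x hx
    exact (hinvpos x (le_trans ht hx.1.le)).le
  -- additivity
  have hFadd : ∀ a b : ℝ, t ≤ a → a ≤ b →
      (∫ x in Ioc t b, (ω x)⁻¹) = (∫ x in Ioc t a, (ω x)⁻¹) + ∫ x in Ioc a b, (ω x)⁻¹ := by
    intro a b hta hab
    rw [← Ioc_union_Ioc_eq_Ioc hta hab,
      setIntegral_union (Ioc_disjoint_Ioc_of_le le_rfl) measurableSet_Ioc (hInt t a ht)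
        (hInt a b (le_trans ht hta))]
  -- v is between 0 and 1 on Ioi t
  have hv01 : ∀ r ∈ Ioi t, 0 ≤ v r ∧ v r ≤ 1 := by
    intro r hr
    rw [hv r hr]
    split_ifs with h1 h2 h3
    · constructor
      · apply div_nonneg _ hA0.le
        apply setIntegral_nonneg measurableSet_Ioc
        intro x hx; exact (hinvpos x (le_trans ht hx.1.le)).le
      · rw [div_le_one hA0]; exact hFmono r s h1
    · exact ⟨zero_le_one, le_refl 1⟩
    · have h2' : s₀ < r := lt_of_not_ge h2
      have hFr : (∫ x in Ioc t r, (ω x)⁻¹) = A + ∫ x in Ioc s r, (ω x)⁻¹ :=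
        hFadd s r hts.le (le_trans hss.le h2'.le)
      have hsplit : (∫ x in Ioc s r, (ω x)⁻¹) = C + ∫ x in Ioc s₀ r, (ω x)⁻¹ := by
        rw [hCdef, ← Ioc_union_Ioc_eq_Ioc hss.le h2'.le,
          setIntegral_union (Ioc_disjoint_Ioc_of_le le_rfl) measurableSet_Ioc (hInt s s₀ hs0)
            (hInt s₀ r hs₀0)]
      have hnn : 0 ≤ ∫ x in Ioc s₀ r, (ω x)⁻¹ :=
        setIntegral_nonneg measurableSet_Ioc fun x hx =>
          (hinvpos x (le_trans hs₀0 hx.1.le)).le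
      have hub : (∫ x in Ioc s₀ r, (ω x)⁻¹) ≤ B := by
        refine setIntegral_mono_set (hInt s₀ s₁ hs₀0) ?_
          (HasSubset.Subset.eventuallyLE (Ioc_subset_Ioc_right h3))
        filter_upwards [ae_restrict_mem measurableSet_Ioc] with x hx
        exact (hinvpos x (le_trans hs₀0 hx.1.le)).le
      have hlo : B ≤ (∫ x in Ioc t r, (ω x)⁻¹) - A := by
        rw [hFr, hsplit, ← heq]; linarith
      have hhi : (∫ x in Ioc t r, (ω x)⁻¹) - A ≤ 2 * B := by
        rw [hFr, hsplit, ← heq]; linarith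
      constructor
      · have : ((∫ x in Ioc t r, (ω x)⁻¹) - A) / B ≤ 2 := by
          rw [div_le_iff₀ hB0]; linarith
        linarith
      · have : 1 ≤ ((∫ x in Ioc t r, (ω x)⁻¹) - A) / B := by
          rw [le_div_iff₀ hB0]; linarith
        linarith
    · exact ⟨le_refl 0, zero_le_one⟩
  -- a measurable representative of v on Ioi t
  set w : ℝ → ℝ := fun r =>
    if r ≤ s then (∫ x in Ioc t r, (ω x)⁻¹) / A
    else if r ≤ s₀ then 1
    else if r ≤ s₁ then 2 - ((∫ x in Ioc t r, (ω x)⁻¹) - A) / B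
    else 0 with hwdef
  have hvw : ∀ r ∈ Ioi t, v r = w r := fun r hr => hv r hr
  have hFmeas : Measurable (fun r : ℝ => ∫ x in Ioc t r, (ω x)⁻¹) := by
    apply Monotone.measurable
    intro r₁ r₂ h
    exact hFmono r₁ r₂ h
  have hwmeas : Measurable w := by
    refine Measurable.ite measurableSet_Iic (hFmeas.div_const A) ?_
    refine Measurable.ite measurableSet_Iic measurable_const ?_
    refine Measurable.ite measurableSet_Iic ?_ measurable_const
    exact (measurable_const.sub ((hFmeas.sub_const A).div_const B))
  have hωm : AEStronglyMeasurable ω (volume.restrict (Ioi t)) :=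
    (hωc.mono fun x hx => le_trans ht (le_of_lt hx)).aestronglyMeasurable measurableSet_Ioi
  have hDmeas : AEStronglyMeasurable (fun r => (v r)^2 * ω r) (volume.restrict (Ioi t)) := by
    refine AEStronglyMeasurable.congr
      ((((hwmeas.pow_const 2).aestronglyMeasurable.restrict).mul hωm)) ?_
    filter_upwards [ae_restrict_mem measurableSet_Ioi] with r hr
    simp only [Pi.mul_apply]
    rw [hvw r hr]
  have hDint : IntegrableOn (fun r => (v r)^2 * ω r) (Ioi t) := by
    refine Integrable.mono' (g := fun r => (Ioc t s₁).indicator ω r)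
      (((integrable_indicator_iff measurableSet_Ioc).2 (hIntω t s₁ ht)).restrict) hDmeas ?_
    rw [ae_restrict_iff' measurableSet_Ioi]
    apply ae_of_all
    intro r hr
    have h0r : 0 < r := lt_of_le_of_lt ht hr
    have hb := hv01 r hr
    have hω := hωpos r h0r.le
    by_cases hrs : r ≤ s₁
    · show ‖v r ^ 2 * ω r‖ ≤ (Ioc t s₁).indicator ω r
      rw [indicator_of_mem (show r ∈ Ioc t s₁ from ⟨hr, hrs⟩)]
      rw [Real.norm_eq_abs, abs_mul, abs_of_nonneg (sq_nonneg (v r)), abs_of_pos hω]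
      have h1 : v r ^ 2 ≤ 1 := by nlinarith [hb.1, hb.2]
      calc v r ^ 2 * ω r ≤ 1 * ω r := mul_le_mul_of_nonneg_right h1 hω.le
      _ = ω r := one_mul _
    · have hv0 : v r = 0 := by
        rw [hv r hr, if_neg (by linarith : ¬ r ≤ s), if_neg (by linarith : ¬ r ≤ s₀),
          if_neg hrs]
      show ‖v r ^ 2 * ω r‖ ≤ (Ioc t s₁).indicator ω r
      rw [hv0, indicator_of_notMem (fun hmem => hrs hmem.2)]
      simp
  -- lower bound on the denominator
  have hWD : W ≤ ∫ r in Ioi t, (v r)^2 * ω r := by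
    have h1 : W = ∫ r in Ioc s s₀, (v r)^2 * ω r := by
      rw [hWdef]
      apply setIntegral_congr_fun measurableSet_Ioc
      intro r hr
      have hrt : r ∈ Ioi t := lt_trans hts hr.1
      show ω r = v r ^ 2 * ω r
      rw [hv r hrt, if_neg (not_le.2 hr.1), if_pos hr.2]
      ring
    rw [h1]
    refine setIntegral_mono_set hDint ?_
      (HasSubset.Subset.eventuallyLE fun r hr => lt_trans hts hr.1)
    filter_upwards [ae_restrict_mem measurableSet_Ioi] with r hr
    exact mul_nonneg (sq_nonneg _) (hωpos r (le_trans ht (le_of_lt hr))).le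
  -- FTC derivative of the running integral
  have hG : ∀ r : ℝ, 0 < r → HasDerivAt (fun u => ∫ x in t..u, (ω x)⁻¹) (ω r)⁻¹ r := by
    intro r hr0
    apply intervalIntegral.integral_hasDerivAt_right
    · apply ContinuousOn.intervalIntegrable
      exact hinvc.mono (fun x hx => le_trans (le_min ht hr0.le) hx.1)
    · exact ⟨Ioi 0, Ioi_mem_nhds hr0,
        (hinvc.mono (fun x hx => le_of_lt hx)).aestronglyMeasurable measurableSet_Ioi⟩
    · exact hinvc.continuousAt (Ici_mem_nhds hr0)
  -- pointwise identification of the Dirichlet integrand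
  set p : ℝ → ℝ := fun r =>
    (Ioo t s).indicator (fun x => (ω x)⁻¹ / A^2) r
      + (Ioo s₀ s₁).indicator (fun x => (ω x)⁻¹ / B^2) r with hpdef
  have hae : ∀ᵐ r : ℝ, r ∈ Ioi t → (deriv v r)^2 * ω r = p r := by
    have hzm : volume ({s, s₀, s₁} : Set ℝ) = 0 := (Set.toFinite _).measure_zero volume
    have hz : ∀ᵐ r : ℝ, r ∉ ({s, s₀, s₁} : Set ℝ) := measure_eq_zero_iff_ae_notMem.mp hzm
    filter_upwards [hz] with r hrz hrt
    have hr0 : 0 < r := lt_of_le_of_lt ht hrt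
    have hω := hωpos r hr0.le
    have hrs : r ≠ s := fun h => hrz (by simp [h])
    have hrs₀ : r ≠ s₀ := fun h => hrz (by simp [h])
    have hrs₁ : r ≠ s₁ := fun h => hrz (by simp [h])
    rcases lt_trichotomy r s with h | h | h
    · -- t < r < s
      have hev : v =ᶠ[nhds r] fun u => (∫ x in t..u, (ω x)⁻¹) / A := by
        filter_upwards [Ioo_mem_nhds hrt h] with u hu
        rw [hv u hu.1, if_pos hu.2.le, intervalIntegral.integral_of_le (le_of_lt hu.1)]
      have hd : deriv v r = (ω r)⁻¹ / A := by
        rw [hev.deriv_eq]; exact ((hG r hr0).div_const A).deriv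
      have hp : p r = (ω r)⁻¹ / A^2 := by
        rw [hpdef]
        simp only
        rw [indicator_of_mem (show r ∈ Ioo t s from ⟨hrt, h⟩),
          indicator_of_notMem (fun hmem => absurd hmem.1 (by linarith))]
        ring
      rw [hd, hp]
      field_simp
    · exact absurd h hrs
    · rcases lt_trichotomy r s₀ with h2 | h2 | h2
      · -- s < r < s₀
        have hev : v =ᶠ[nhds r] fun _ => (1:ℝ) := by
          filter_upwards [Ioo_mem_nhds h h2] with u hu
          rw [hv u (lt_trans hts hu.1), if_neg (not_le.2 hu.1), if_pos hu.2.le]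
        have hd : deriv v r = 0 := by rw [hev.deriv_eq, deriv_const]
        have hp : p r = 0 := by
          rw [hpdef]
          simp only
          rw [indicator_of_notMem (fun hmem => absurd hmem.2 (by linarith)),
            indicator_of_notMem (fun hmem => absurd hmem.1 (by linarith))]
          ring
        rw [hd, hp]; ring
      · exact absurd h2 hrs₀
      · rcases lt_trichotomy r s₁ with h3 | h3 | h3
        · -- s₀ < r < s₁
          have hev : v =ᶠ[nhds r] fun u => 2 - ((∫ x in t..u, (ω x)⁻¹) - A) / B := by
            filter_upwards [Ioo_mem_nhds h2 h3] with u hu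
            have hu_t : t < u := by linarith [hu.1]
            rw [hv u hu_t, if_neg (by nlinarith [hu.1] : ¬ u ≤ s),
              if_neg (not_le.2 hu.1), if_pos hu.2.le,
              intervalIntegral.integral_of_le hu_t.le]
          have hd : deriv v r = 0 - (ω r)⁻¹ / B := by
            rw [hev.deriv_eq]
            exact ((hasDerivAt_const r (2:ℝ)).sub (((hG r hr0).sub_const A).div_const B)).deriv
          have hp : p r = (ω r)⁻¹ / B^2 := by
            rw [hpdef]
            simp only
            rw [indicator_of_notMem (fun hmem => absurd hmem.2 (by linarith)),
              indicator_of_mem (show r ∈ Ioo s₀ s₁ from ⟨h2, h3⟩)]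
            ring
          rw [hd, hp]
          field_simp
          ring
        · exact absurd h3 hrs₁
        · -- r > s₁
          have hev : v =ᶠ[nhds r] fun _ => (0:ℝ) := by
            filter_upwards [Ioi_mem_nhds h3] with u hu
            have hu' : s₁ < u := hu
            rw [hv u (mem_Ioi.mpr (by linarith)), if_neg (by linarith : ¬ u ≤ s),
              if_neg (by linarith : ¬ u ≤ s₀), if_neg (by linarith : ¬ u ≤ s₁)]
          have hd : deriv v r = 0 := by rw [hev.deriv_eq, deriv_const]
          have hp : p r = 0 := by
            rw [hpdef]
            simp only
            rw [indicator_of_notMem (fun hmem => absurd hmem.2 (by linarith)),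
              indicator_of_notMem (fun hmem => absurd hmem.2 (by linarith))]
            ring
          rw [hd, hp]; ring
  -- value of the numerator
  have hint1 : Integrable ((Ioo t s).indicator (fun x => (ω x)⁻¹ / A^2)) :=
    (integrable_indicator_iff measurableSet_Ioo).2
      (((hInt t s ht).mono_set Ioo_subset_Ioc_self).div_const _)
  have hint2 : Integrable ((Ioo s₀ s₁).indicator (fun x => (ω x)⁻¹ / B^2)) :=
    (integrable_indicator_iff measurableSet_Ioo).2
      (((hInt s₀ s₁ hs₀0).mono_set Ioo_subset_Ioc_self).div_const _)
  have hNum : (∫ r in Ioi t, (deriv v r)^2 * ω r) = A⁻¹ + B⁻¹ := by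
    rw [setIntegral_congr_ae measurableSet_Ioi hae, hpdef]
    rw [integral_add hint1.restrict hint2.restrict]
    rw [setIntegral_indicator measurableSet_Ioo, setIntegral_indicator measurableSet_Ioo]
    have hsub2 : Ioo s₀ s₁ ⊆ Ioi t := fun x hx => lt_trans (lt_trans hts hss) hx.1
    rw [inter_eq_self_of_subset_right Ioo_subset_Ioi_self,
      inter_eq_self_of_subset_right hsub2]
    rw [integral_div, integral_div, ← integral_Ioc_eq_integral_Ioo,
      ← integral_Ioc_eq_integral_Ioo, ← hAdef, ← hBdef]
    rw [sq, sq]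
    field_simp
  rw [hNum]
  have hstep : (A⁻¹ + B⁻¹) / (∫ r in Ioi t, (v r)^2 * ω r) ≤ (A⁻¹ + B⁻¹) / W :=
    div_le_div_of_nonneg_left (by positivity) hW0 hWD
  refine le_trans hstep (le_of_eq ?_)
  rw [← heq]
  rw [div_eq_iff hW0.ne', mul_inv, mul_comm]
  field_simp [hA0.ne', hC0.ne', hW0.ne']
end

section
/- Let f, g : [0,∞) → (0,∞) be continuous with ∫_0^∞ g dr = ∞, f decreasing with f(s) → 0 as s → ∞, where f(s) = ∫_s^∞ ω̄⁻¹ dr and g = ω̄ for a positive continuous ω̄. If lim_{s→∞} f(s) ∫_0^s g dr = 0, then for every fixed a > 0, lim_{t→∞} f(a+t) ∫_t^{a+t} g dr = 0, and consequently lim_{t→∞} sup over the shifted windows yields lim_{t→∞} f(s) ∫_t^s g dr = 0 uniformly in s > t in the sense that sup_{s>t} f(s) ∫_t^s g dr → 0. -/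
open MeasureTheory Set Filter
open scoped ENNReal

/-- Nontrivial direction of Corollary 3.2: with f(s) = ∫_s^∞ ω̄⁻¹ decreasing to 0 and
∫_0^∞ ω̄ = ∞, if f(s)·∫_0^s ω̄ → 0 then for every a > 0, f(a+t)·∫_t^{a+t} ω̄ → 0, and
sup_{s>t} f(s)·∫_t^s ω̄ → 0 as t → ∞. -/
theorem stmt15 (ω : ℝ → ℝ)
    (hωc : ContinuousOn ω (Ici 0)) (hωpos : ∀ r ∈ Ici (0:ℝ), 0 < ω r)
    (hvol : ∫⁻ r in Ioi 0, ENNReal.ofReal (ω r) = ⊤)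
    (hinv : IntegrableOn (fun r => (ω r)⁻¹) (Ioi 0))
    (f : ℝ → ℝ) (hf : ∀ s, f s = ∫ r in Ioi s, (ω r)⁻¹)
    (hfdec : Antitone f) (hf0 : Tendsto f atTop (nhds 0))
    (h0 : Tendsto (fun s => f s * ∫ r in Ioc 0 s, ω r) atTop (nhds 0)) :
    (∀ a > (0:ℝ), Tendsto (fun t => f (a + t) * ∫ r in Ioc t (a + t), ω r) atTop (nhds 0)) ∧
    Tendsto (fun t : ℝ => ⨆ s ∈ Ioi t, ENNReal.ofReal (f s * ∫ r in Ioc t s, ω r))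
      atTop (nhds 0) := by
  have hfnn : ∀ s, 0 ≤ f s := fun s => hfdec.le_of_tendsto hf0 s
  have hωint : ∀ x : ℝ, IntegrableOn ω (Ioc 0 x) := by
    intro x
    rcases le_or_gt x 0 with h | h
    · rw [Ioc_eq_empty (by linarith)]; simp [IntegrableOn]
    · exact ((hωc.mono (Icc_subset_Ici_self)).integrableOn_Icc).mono_set Ioc_subset_Icc_self
  have hωnn : ∀ x : ℝ, 0 ≤ᵐ[volume.restrict (Ioc 0 x)] ω := by
    intro x
    exact (ae_restrict_iff' measurableSet_Ioc).2
      (Filter.Eventually.of_forall fun r hr => (hωpos r hr.1.le).le)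
  have hmono : ∀ t s : ℝ, 0 ≤ t → (∫ r in Ioc t s, ω r) ≤ ∫ r in Ioc 0 s, ω r := by
    intro t s ht
    exact setIntegral_mono_set (hωint s) (hωnn s)
      ((Ioc_subset_Ioc_left ht).eventuallyLE)
  have hwin_nn : ∀ t s : ℝ, 0 ≤ t → 0 ≤ ∫ r in Ioc t s, ω r := by
    intro t s ht
    apply setIntegral_nonneg measurableSet_Ioc
    intro r hr; exact (hωpos r (le_trans ht hr.1.le)).le
  constructor
  · intro a ha
    have hcomp : Tendsto (fun t : ℝ => f (a + t) * ∫ r in Ioc 0 (a + t), ω r)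
        atTop (nhds 0) := h0.comp (tendsto_atTop_add_const_left atTop a tendsto_id)
    apply tendsto_of_tendsto_of_tendsto_of_le_of_le' tendsto_const_nhds hcomp
    · filter_upwards [eventually_ge_atTop (0:ℝ)] with t ht
      exact mul_nonneg (hfnn _) (hwin_nn t (a + t) ht)
    · filter_upwards [eventually_ge_atTop (0:ℝ)] with t ht
      exact mul_le_mul_of_nonneg_left (hmono t (a + t) ht) (hfnn _)
  · rw [ENNReal.tendsto_nhds_zero]
    intro ε hε
    set δ : ℝ := if ε = ⊤ then 1 else ε.toReal with hδ
    have hδpos : 0 < δ := by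
      rw [hδ]; split
      · norm_num
      · exact ENNReal.toReal_pos hε.ne' (by assumption)
    have hδε : ENNReal.ofReal δ ≤ ε := by
      rw [hδ]; split
      · next h => simp [h]
      · rw [ENNReal.ofReal_toReal (by assumption)]
    obtain ⟨T, hT⟩ := (Metric.tendsto_atTop.1 h0) δ hδpos
    filter_upwards [eventually_ge_atTop (max T 0)] with t ht
    apply iSup₂_le
    intro s hs
    refine le_trans (ENNReal.ofReal_le_ofReal ?_) hδε
    have htnn : (0:ℝ) ≤ t := le_trans (le_max_right T 0) ht
    calc f s * ∫ r in Ioc t s, ω r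
        ≤ f s * ∫ r in Ioc 0 s, ω r :=
          mul_le_mul_of_nonneg_left (hmono t s htnn) (hfnn s)
      _ ≤ δ := by
          have hsT : s ≥ T := le_trans (le_trans (le_max_left T 0) ht) hs.le
          have := hT s hsT
          rw [Real.dist_eq, sub_zero] at this
          exact le_of_lt (lt_of_abs_lt this)
end
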